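/- arXiv:1311.3073 — 4 statements merged into one kernel-verified Lean document; each statement's English description precedes it below -/
import Mathlib

section
/- Let L > 0, β ≥ 0, and G : ℝ → ℝ be a C¹, L-periodic function with G(y) > 0 for all y. Set Y* = {(y,z) ∈ ℝ² : 0 < y < L, −β < z < G(y)}. Let X be a real-valued function, C¹ on an open neighborhood of the closed band {(y,z) : y ∈ ℝ, −β ≤ z ≤ G(y)}, twice differentiable on the open band with ΔX = ∂²_y X + ∂²_z X = 0 there, L-periodic in y (X(y+L, z) = X(y,z) for all (y,z)), and satisfying the Neumann conditions ∂_z X(y, −β) = 0 for all y and ∂_z X(y, G(y)) − G'(y) ∂_y X(y, G(y)) = −G'(y) for all y. Then ∫_{Y*} ( (∂_y X)² + (∂_z X)² ) dy dz = ∫_{Y*} ∂_y X dy dz. -/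
open MeasureTheory Set Filter Topology


noncomputable section

def Lmap (a c : ℝ) : ℝ × ℝ →L[ℝ] ℝ × ℝ :=
  (ContinuousLinearMap.fst ℝ ℝ ℝ).prod
    (a • ContinuousLinearMap.fst ℝ ℝ ℝ + c • ContinuousLinearMap.snd ℝ ℝ ℝ)

lemma Lmap_apply (a c : ℝ) (p : ℝ × ℝ) : Lmap a c p = (p.1, a * p.1 + c * p.2) := rfl

lemma det_Lmap (a c : ℝ) : (Lmap a c).det = c := by
  have h : (Lmap a c).det = LinearMap.det ((Lmap a c : ℝ × ℝ →ₗ[ℝ] ℝ × ℝ)) := rfl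
  rw [h, ← LinearMap.det_toMatrix (Module.Basis.finTwoProd ℝ), Matrix.det_fin_two]
  simp [LinearMap.toMatrix_apply, Lmap, Module.Basis.finTwoProd_zero, Module.Basis.finTwoProd_one]

lemma clm_eval (T : ℝ × ℝ →L[ℝ] ℝ) (u v : ℝ) : T (u, v) = u * T (1, 0) + v * T (0, 1) := by
  have h : (u, v) = u • ((1:ℝ), (0:ℝ)) + v • ((0:ℝ), (1:ℝ)) := by
    simp [Prod.ext_iff]
  rw [h, map_add, _root_.map_smul, _root_.map_smul, smul_eq_mul, smul_eq_mul]

def Cg (g' : ℝ → ℝ) (x : ℝ × ℝ) : ℝ × ℝ →L[ℝ] ℝ :=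
  (ContinuousLinearMap.smulRight (1 : ℝ →L[ℝ] ℝ) (g' x.1)).comp (ContinuousLinearMap.fst ℝ ℝ ℝ)

def LM (β : ℝ) (g g' : ℝ → ℝ) (x : ℝ × ℝ) : ℝ × ℝ →L[ℝ] ℝ × ℝ :=
  Lmap (x.2 * g' x.1) (g x.1 + β)

def Phi (β : ℝ) (g : ℝ → ℝ) (x : ℝ × ℝ) : ℝ × ℝ := (x.1, -β + x.2 * (g x.1 + β))

def fF (β : ℝ) (g : ℝ → ℝ) (P : ℝ × ℝ → ℝ) (x : ℝ × ℝ) : ℝ :=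
  (g x.1 + β) * P (Phi β g x)

def gF (β : ℝ) (g g' : ℝ → ℝ) (P Q : ℝ × ℝ → ℝ) (x : ℝ × ℝ) : ℝ :=
  -(x.2 * g' x.1) * P (Phi β g x) + Q (Phi β g x)

def F'formula (β : ℝ) (g g' : ℝ → ℝ) (P : ℝ × ℝ → ℝ) (P' : ℝ × ℝ → (ℝ × ℝ →L[ℝ] ℝ))
    (x : ℝ × ℝ) : ℝ × ℝ →L[ℝ] ℝ :=
  (g x.1 + β) • ((P' (Phi β g x)).comp (LM β g g' x)) + (P (Phi β g x)) • Cg g' x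

def G'formula (β : ℝ) (g g' g'' : ℝ → ℝ) (P : ℝ × ℝ → ℝ)
    (P' Q' : ℝ × ℝ → (ℝ × ℝ →L[ℝ] ℝ)) (x : ℝ × ℝ) : ℝ × ℝ →L[ℝ] ℝ :=
  (-(x.2 * g' x.1)) • ((P' (Phi β g x)).comp (LM β g g' x))
    + (P (Phi β g x)) • (-(x.2 • Cg g'' x + g' x.1 • ContinuousLinearMap.snd ℝ ℝ ℝ))
    + (Q' (Phi β g x)).comp (LM β g g' x)

variable {β : ℝ} {g g' g'' : ℝ → ℝ} {P Q : ℝ × ℝ → ℝ} {P' Q' : ℝ × ℝ → (ℝ × ℝ →L[ℝ] ℝ)}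

lemma hasFDerivAt_Phi (hg : ∀ y, HasDerivAt g (g' y) y) (x : ℝ × ℝ) :
    HasFDerivAt (Phi β g) (LM β g g' x) x := by
  have hc : HasFDerivAt (fun x : ℝ × ℝ => g x.1 + β) (Cg g' x) x :=
    (((hg x.1).hasFDerivAt.comp x hasFDerivAt_fst)).add_const β
  have h2 : HasFDerivAt (fun x : ℝ × ℝ => -β + x.2 * (g x.1 + β))
      (x.2 • Cg g' x + (g x.1 + β) • ContinuousLinearMap.snd ℝ ℝ ℝ) x := by
    have := (hasFDerivAt_snd (𝕜 := ℝ) (E := ℝ) (F := ℝ) (p := x)).mul hc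
    exact this.const_add (-β)
  have h3 := (hasFDerivAt_fst (𝕜 := ℝ) (E := ℝ) (F := ℝ) (p := x)).prodMk h2
  have heq : (ContinuousLinearMap.fst ℝ ℝ ℝ).prod
      (x.2 • Cg g' x + (g x.1 + β) • ContinuousLinearMap.snd ℝ ℝ ℝ) = LM β g g' x := by
    refine ContinuousLinearMap.ext fun p => ?_
    refine Prod.ext rfl ?_
    show x.2 • (Cg g' x p) + (g x.1 + β) • p.2 = x.2 * g' x.1 * p.1 + (g x.1 + β) * p.2
    simp [Cg, smul_eq_mul]; ring
  rwa [heq] at h3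

lemma hasFDerivAt_fF (hg : ∀ y, HasDerivAt g (g' y) y) (x : ℝ × ℝ)
    (hP : HasFDerivAt P (P' (Phi β g x)) (Phi β g x)) :
    HasFDerivAt (fF β g P) (F'formula β g g' P P' x) x := by
  have hc : HasFDerivAt (fun x : ℝ × ℝ => g x.1 + β) (Cg g' x) x :=
    (((hg x.1).hasFDerivAt.comp x hasFDerivAt_fst)).add_const β
  have hPΦ : HasFDerivAt (fun x : ℝ × ℝ => P (Phi β g x))
      ((P' (Phi β g x)).comp (LM β g g' x)) x :=
    hP.comp x (hasFDerivAt_Phi hg x)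
  exact hc.mul hPΦ

lemma hasFDerivAt_gF (hg : ∀ y, HasDerivAt g (g' y) y) (x : ℝ × ℝ)
    (hg'x : HasDerivAt g' (g'' x.1) x.1)
    (hP : HasFDerivAt P (P' (Phi β g x)) (Phi β g x))
    (hQ : HasFDerivAt Q (Q' (Phi β g x)) (Phi β g x)) :
    HasFDerivAt (gF β g g' P Q) (G'formula β g g' g'' P P' Q' x) x := by
  have hPΦ : HasFDerivAt (fun x : ℝ × ℝ => P (Phi β g x))
      ((P' (Phi β g x)).comp (LM β g g' x)) x := hP.comp x (hasFDerivAt_Phi hg x)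
  have hQΦ : HasFDerivAt (fun x : ℝ × ℝ => Q (Phi β g x))
      ((Q' (Phi β g x)).comp (LM β g g' x)) x := hQ.comp x (hasFDerivAt_Phi hg x)
  have hA : HasFDerivAt (fun x : ℝ × ℝ => x.2 * g' x.1)
      (x.2 • Cg g'' x + g' x.1 • ContinuousLinearMap.snd ℝ ℝ ℝ) x := by
    have h1 : HasFDerivAt (fun x : ℝ × ℝ => g' x.1) (Cg g'' x) x :=
      hg'x.hasFDerivAt.comp x hasFDerivAt_fst
    exact (hasFDerivAt_snd (𝕜 := ℝ) (E := ℝ) (F := ℝ) (p := x)).mul h1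
  have hmul := hA.neg.mul hPΦ
  exact hmul.add hQΦ

lemma div_eval {d : ℝ} (x : ℝ × ℝ)
    (hd : P' (Phi β g x) (1, 0) + Q' (Phi β g x) (0, 1) = d) :
    F'formula β g g' P P' x (1, 0) + G'formula β g g' g'' P P' Q' x (0, 1)
      = (g x.1 + β) * d := by
  simp only [F'formula, G'formula, ContinuousLinearMap.add_apply,
    ContinuousLinearMap.coe_smul', Pi.smul_apply, ContinuousLinearMap.comp_apply,
    ContinuousLinearMap.neg_apply, LM, Lmap_apply, Cg,
    ContinuousLinearMap.smulRight_apply, ContinuousLinearMap.one_apply,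
    ContinuousLinearMap.coe_fst', ContinuousLinearMap.coe_snd', smul_eq_mul,
    mul_one, mul_zero, add_zero, zero_add, one_mul, zero_mul]
  rw [clm_eval (P' (Phi β g x)) 1 (x.2 * g' x.1), clm_eval (P' (Phi β g x)) 0 (g x.1 + β),
    clm_eval (Q' (Phi β g x)) 0 (g x.1 + β)]
  linear_combination (g x.1 + β) * hd

end

section KeyIdentity

set_option maxHeartbeats 2000000 in
lemma key_identity
    {L β : ℝ} (hL : 0 < L)
    {U : Set (ℝ × ℝ)} (hUopen : IsOpen U)
    {g g' g'' : ℝ → ℝ}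
    (hg : ∀ y, HasDerivAt g (g' y) y)
    (hg'c : Continuous g')
    (hg'' : ∀ y ∈ Ioo (0:ℝ) L, HasDerivAt g' (g'' y) y)
    (hgL : g L = g 0)
    (hgpos : ∀ y ∈ Icc (0:ℝ) L, -β < g y)
    (hKU : {p : ℝ × ℝ | p.1 ∈ Icc 0 L ∧ p.2 ∈ Icc (-β) (g p.1)} ⊆ U)
    {P Q DIV : ℝ × ℝ → ℝ} {P' Q' : ℝ × ℝ → (ℝ × ℝ →L[ℝ] ℝ)}
    (hP : ContinuousOn P U) (hQ : ContinuousOn Q U) (hDIV : ContinuousOn DIV U)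
    (hder : ∀ p : ℝ × ℝ, p.1 ∈ Ioo 0 L → p.2 ∈ Ioo (-β) (g p.1) →
      HasFDerivAt P (P' p) p ∧ HasFDerivAt Q (Q' p) p)
    (hdiv : ∀ p : ℝ × ℝ, p.1 ∈ Ioo 0 L → p.2 ∈ Ioo (-β) (g p.1) →
      P' p (1, 0) + Q' p (0, 1) = DIV p)
    (hper : ∀ z ∈ Icc (-β) (g 0), P (L, z) = P (0, z)) :
    ∫ p in {p : ℝ × ℝ | p.1 ∈ Ioo 0 L ∧ p.2 ∈ Ioo (-β) (g p.1)}, DIV p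
      = (∫ y in (0:ℝ)..L, (Q (y, g y) - g' y * P (y, g y)))
        - ∫ y in (0:ℝ)..L, Q (y, -β) := by
  classical
  have hgcont : Continuous g := by
    have hd : Differentiable ℝ g := fun y => (hg y).differentiableAt
    exact hd.continuous
  set R : Set (ℝ × ℝ) := Ioo 0 L ×ˢ Ioo (0:ℝ) 1 with hR
  have hRmeas : MeasurableSet R := (isOpen_Ioo.prod isOpen_Ioo).measurableSet
  have hcpos : ∀ y ∈ Icc (0:ℝ) L, 0 < g y + β := fun y hy => by
    have := hgpos y hy; linarith
  have hPhiR : ∀ x ∈ R, (Phi β g x).1 ∈ Ioo (0:ℝ) L ∧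
      (Phi β g x).2 ∈ Ioo (-β) (g (Phi β g x).1) := by
    rintro ⟨y, s⟩ ⟨hy, hs⟩
    have hc := hcpos y (Ioo_subset_Icc_self hy)
    refine ⟨hy, ?_, ?_⟩
    · have : 0 < s * (g y + β) := mul_pos hs.1 hc
      show -β < -β + s * (g y + β); linarith
    · show -β + s * (g y + β) < g y
      have : s * (g y + β) < 1 * (g y + β) := mul_lt_mul_of_pos_right hs.2 hc
      linarith
  have hPhiIcc : ∀ x ∈ Icc 0 L ×ˢ Icc (0:ℝ) 1,
      Phi β g x ∈ {p : ℝ × ℝ | p.1 ∈ Icc 0 L ∧ p.2 ∈ Icc (-β) (g p.1)} := by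
    rintro ⟨y, s⟩ ⟨hy, hs⟩
    have hc := hcpos y hy
    refine ⟨hy, ?_, ?_⟩
    · show -β ≤ -β + s * (g y + β)
      nlinarith [mul_nonneg hs.1 hc.le]
    · show -β + s * (g y + β) ≤ g y
      nlinarith [mul_le_mul_of_nonneg_right hs.2 hc.le]
  have hPhiC : Continuous (Phi β g) :=
    continuous_fst.prodMk (continuous_const.add
      (continuous_snd.mul ((hgcont.comp continuous_fst).add continuous_const)))
  have hRsub : R ⊆ Icc 0 L ×ˢ Icc (0:ℝ) 1 :=
    prod_mono Ioo_subset_Icc_self Ioo_subset_Icc_self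
  set F1 : ℝ × ℝ → (ℝ × ℝ →L[ℝ] ℝ) :=
    fun x => if x ∈ R then F'formula β g g' P P' x else 0 with hF1
  set G1 : ℝ × ℝ → (ℝ × ℝ →L[ℝ] ℝ) :=
    fun x => if x ∈ R then G'formula β g g' g'' P P' Q' x else 0 with hG1
  have hab : ((0, 0) : ℝ × ℝ) ≤ (L, 1) := ⟨hL.le, zero_le_one⟩
  have hmapsU : ∀ x ∈ Icc 0 L ×ˢ Icc (0:ℝ) 1, Phi β g x ∈ U := fun x hx => hKU (hPhiIcc x hx)
  have HcPΦ : ContinuousOn (fun x : ℝ × ℝ => P (Phi β g x)) (Icc 0 L ×ˢ Icc (0:ℝ) 1) :=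
    hP.comp hPhiC.continuousOn hmapsU
  have hIccEq : Icc ((0, 0) : ℝ × ℝ) (L, 1) = Icc 0 L ×ˢ Icc (0:ℝ) 1 := Icc_prod_eq _ _
  have Hcf : ContinuousOn (fF β g P) (Icc 0 L ×ˢ Icc (0:ℝ) 1) :=
    (((hgcont.comp continuous_fst).add continuous_const).continuousOn).mul HcPΦ
  have Hcg : ContinuousOn (gF β g g' P Q) (Icc 0 L ×ˢ Icc (0:ℝ) 1) :=
    (((continuous_snd.mul (hg'c.comp continuous_fst)).neg.continuousOn).mul HcPΦ).add
      (hQ.comp hPhiC.continuousOn hmapsU)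
  have hind : (fun x => F1 x (1, 0) + G1 x (0, 1))
      = R.indicator (fun x => (g x.1 + β) * DIV (Phi β g x)) := by
    funext x
    by_cases hx : x ∈ R
    · rw [indicator_of_mem hx, hF1, hG1]
      simp only [if_pos hx]
      exact div_eval x (hdiv _ (hPhiR x hx).1 (hPhiR x hx).2)
    · rw [indicator_of_notMem hx, hF1, hG1]
      simp [hx]
  have hcont2 : ContinuousOn (fun x : ℝ × ℝ => (g x.1 + β) * DIV (Phi β g x))
      (Icc 0 L ×ˢ Icc (0:ℝ) 1) :=
    (((hgcont.comp continuous_fst).add continuous_const).continuousOn).mul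
      (hDIV.comp hPhiC.continuousOn hmapsU)
  have hi0 : IntegrableOn (fun x : ℝ × ℝ => (g x.1 + β) * DIV (Phi β g x))
      (Icc 0 L ×ˢ Icc (0:ℝ) 1) :=
    hcont2.integrableOn_compact (isCompact_Icc.prod isCompact_Icc)
  have Hi : IntegrableOn (fun x => F1 x (1, 0) + G1 x (0, 1))
      (Icc ((0, 0) : ℝ × ℝ) (L, 1)) := by
    rw [hind, hIccEq]
    exact hi0.indicator hRmeas
  have Hdf : ∀ x ∈ (Ioo ((0:ℝ), (0:ℝ)).1 ((L, (1:ℝ))).1 ×ˢ Ioo ((0:ℝ), (0:ℝ)).2 ((L, (1:ℝ))).2)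
      \ (∅ : Set (ℝ × ℝ)), HasFDerivAt (fF β g P) (F1 x) x := by
    rintro x ⟨hx, -⟩
    rw [hF1]
    simp only [if_pos (show x ∈ R from hx)]
    exact hasFDerivAt_fF hg x (hder _ (hPhiR x hx).1 (hPhiR x hx).2).1
  have Hdg : ∀ x ∈ (Ioo ((0:ℝ), (0:ℝ)).1 ((L, (1:ℝ))).1 ×ˢ Ioo ((0:ℝ), (0:ℝ)).2 ((L, (1:ℝ))).2)
      \ (∅ : Set (ℝ × ℝ)), HasFDerivAt (gF β g g' P Q) (G1 x) x := by
    rintro x ⟨hx, -⟩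
    rw [hG1]
    simp only [if_pos (show x ∈ R from hx)]
    exact hasFDerivAt_gF hg x (hg'' x.1 hx.1)
      (hder _ (hPhiR x hx).1 (hPhiR x hx).2).1 (hder _ (hPhiR x hx).1 (hPhiR x hx).2).2
  have hDT := integral_divergence_prod_Icc_of_hasFDerivAt_off_countable_of_le
    (fF β g P) (gF β g g' P Q) F1 G1 ((0, 0) : ℝ × ℝ) ((L, 1) : ℝ × ℝ) hab ∅ countable_empty
    (by rw [hIccEq]; exact Hcf) (by rw [hIccEq]; exact Hcg) Hdf Hdg Hi
  -- change of variables
  have hinj : InjOn (Phi β g) R := by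
    rintro ⟨y, s⟩ hx ⟨y', s'⟩ hx' h
    have h1 : y = y' := congrArg Prod.fst h
    subst h1
    have h2 : -β + s * (g y + β) = -β + s' * (g y + β) := congrArg Prod.snd h
    have hc := hcpos y (Ioo_subset_Icc_self hx.1)
    have h3 : s * (g y + β) = s' * (g y + β) := by linarith
    have h4 : s = s' := mul_right_cancel₀ hc.ne' h3
    rw [h4]
  have himage : Phi β g '' R = {p : ℝ × ℝ | p.1 ∈ Ioo 0 L ∧ p.2 ∈ Ioo (-β) (g p.1)} := by
    ext ⟨y, z⟩
    constructor
    · rintro ⟨a, haR, h⟩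
      exact h ▸ hPhiR a haR
    · rintro ⟨hy, hz⟩
      have hc := hcpos y (Ioo_subset_Icc_self hy)
      refine ⟨(y, (z + β) / (g y + β)), ⟨hy, ?_, ?_⟩, ?_⟩
      · have hz0 : 0 < z + β := by have := hz.1; linarith
        exact div_pos hz0 hc
      · rw [div_lt_one hc]; have := hz.2; linarith
      · show (y, -β + (z + β) / (g y + β) * (g y + β)) = (y, z)
        refine Prod.ext rfl ?_
        show -β + (z + β) / (g y + β) * (g y + β) = z
        rw [div_mul_cancel₀ _ hc.ne']; ring
  have hCoV := integral_image_eq_integral_abs_det_fderiv_smul volume hRmeas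
    (fun x _ => (hasFDerivAt_Phi hg x).hasFDerivWithinAt) hinj DIV (f' := LM β g g')
  rw [himage] at hCoV
  have hCoV2 : ∫ p in {p : ℝ × ℝ | p.1 ∈ Ioo 0 L ∧ p.2 ∈ Ioo (-β) (g p.1)}, DIV p
      = ∫ x in R, (g x.1 + β) * DIV (Phi β g x) := by
    rw [hCoV]
    refine setIntegral_congr_fun hRmeas fun x hx => ?_
    rw [LM, det_Lmap, abs_of_pos (hcpos x.1 (Ioo_subset_Icc_self hx.1))]
    rfl
  have hLHS : ∫ x in Icc ((0, 0) : ℝ × ℝ) (L, 1), (F1 x (1, 0) + G1 x (0, 1))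
      = ∫ x in R, (g x.1 + β) * DIV (Phi β g x) := by
    rw [hind, hIccEq, setIntegral_indicator hRmeas, inter_eq_self_of_subset_right hRsub]
  -- boundary terms
  have htop : ∫ x in ((0,0) : ℝ × ℝ).1..((L,1) : ℝ × ℝ).1, gF β g g' P Q (x, ((L,1) : ℝ × ℝ).2)
      = ∫ y in (0:ℝ)..L, (Q (y, g y) - g' y * P (y, g y)) := by
    refine intervalIntegral.integral_congr fun y hy => ?_
    show -(1 * g' y) * P (Phi β g (y, 1)) + Q (Phi β g (y, 1)) = _
    have h1 : Phi β g (y, 1) = (y, g y) := by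
      refine Prod.ext rfl ?_
      show -β + 1 * (g y + β) = g y
      ring
    rw [h1]; ring
  have hbot : ∫ x in ((0,0) : ℝ × ℝ).1..((L,1) : ℝ × ℝ).1, gF β g g' P Q (x, ((0,0) : ℝ × ℝ).2)
      = ∫ y in (0:ℝ)..L, Q (y, -β) := by
    refine intervalIntegral.integral_congr fun y hy => ?_
    show -(0 * g' y) * P (Phi β g (y, 0)) + Q (Phi β g (y, 0)) = _
    have h1 : Phi β g (y, 0) = (y, -β) := by
      refine Prod.ext rfl ?_
      show -β + 0 * (g y + β) = -β
      ring
    rw [h1]; ring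
  have hside : ∫ s in ((0,0) : ℝ × ℝ).2..((L,1) : ℝ × ℝ).2, fF β g P (((L,1) : ℝ × ℝ).1, s)
      = ∫ s in ((0,0) : ℝ × ℝ).2..((L,1) : ℝ × ℝ).2, fF β g P (((0,0) : ℝ × ℝ).1, s) := by
    refine intervalIntegral.integral_congr fun s hs => ?_
    rw [uIcc_of_le (zero_le_one : (0:ℝ) ≤ 1)] at hs
    have hc0 := hcpos 0 (left_mem_Icc.mpr hL.le)
    show (g L + β) * P (Phi β g (L, s)) = (g 0 + β) * P (Phi β g (0, s))
    have h1 : Phi β g (L, s) = (L, -β + s * (g 0 + β)) := by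
      refine Prod.ext rfl ?_
      show -β + s * (g L + β) = -β + s * (g 0 + β)
      rw [hgL]
    have h2 : Phi β g (0, s) = (0, -β + s * (g 0 + β)) := rfl
    rw [h1, h2, hgL]
    congr 1
    refine hper _ ⟨?_, ?_⟩
    · nlinarith [mul_nonneg hs.1 hc0.le]
    · nlinarith [mul_le_mul_of_nonneg_right hs.2 hc0.le]
  rw [hLHS] at hDT
  rw [hCoV2, hDT, htop, hbot, hside]
  ring
end KeyIdentity


lemma approx_lemma (L : ℝ) (hL : 0 < L) (G : ℝ → ℝ) (hG : ContDiff ℝ 1 G) (hGL : G L = G 0)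
    {ε : ℝ} (hε : 0 < ε) :
    ∃ g g' g'' : ℝ → ℝ, (∀ y, HasDerivAt g (g' y) y) ∧ Continuous g' ∧
      (∀ y, HasDerivAt g' (g'' y) y) ∧ g L = g 0 ∧
      (∀ y ∈ Icc 0 L, g y < G y ∧ G y - ε ≤ g y ∧ |g' y - deriv G y| ≤ ε) := by
  have hGdiff : Differentiable ℝ G := hG.differentiable one_ne_zero
  have hG'cont : Continuous (deriv G) := hG.continuous_deriv le_rfl
  set ε₁ : ℝ := ε / (4 * L + 2) with hε₁def
  have hε₁ : 0 < ε₁ := by positivity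
  obtain ⟨q, hq⟩ := exists_polynomial_near_of_continuousOn 0 L (deriv G)
    hG'cont.continuousOn ε₁ hε₁
  have hqG : ∀ y ∈ Icc (0:ℝ) L, |q.eval y - deriv G y| ≤ ε₁ := fun y hy => (hq y hy).le
  have hqc : Continuous fun y => q.eval y := q.continuous_aeval
  -- FTC for G
  have hFTC : ∀ y, ∫ t in (0:ℝ)..y, deriv G t = G y - G 0 := fun y =>
    intervalIntegral.integral_deriv_eq_sub (fun x _ => hGdiff x)
      (hG'cont.intervalIntegrable 0 y)
  set c : ℝ := (∫ t in (0:ℝ)..L, q.eval t) / L with hcdef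
  have hcL : ∫ t in (0:ℝ)..L, q.eval t = c * L := by
    rw [hcdef]; field_simp
  have hcbound : |c| ≤ ε₁ := by
    have h1 : (∫ t in (0:ℝ)..L, q.eval t) = (∫ t in (0:ℝ)..L, (q.eval t - deriv G t)) + (G L - G 0) := by
      rw [← hFTC L, ← intervalIntegral.integral_add (f := fun t => q.eval t - deriv G t)
        (g := fun t => deriv G t) ((hqc.sub hG'cont).intervalIntegrable 0 L) (hG'cont.intervalIntegrable 0 L)]
      congr 1; funext t; ring_nf
    have h2 : ‖∫ t in (0:ℝ)..L, (q.eval t - deriv G t)‖ ≤ ε₁ * |L - 0| := by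
      refine intervalIntegral.norm_integral_le_of_norm_le_const fun t ht => ?_
      rw [uIoc_of_le hL.le] at ht
      exact hqG t (Ioc_subset_Icc_self ht)
    rw [hGL, sub_self, add_zero] at h1
    have h3 : |∫ t in (0:ℝ)..L, q.eval t| ≤ ε₁ * L := by
      rw [h1]; simpa [abs_of_pos hL] using h2
    rw [hcdef, abs_div, abs_of_pos hL, div_le_iff₀ hL]
    exact h3
  set d := (2 * ε₁ * L + ε₁ : ℝ) with hddef
  refine ⟨fun y => G 0 - d + ∫ t in (0:ℝ)..y, (q.eval t - c),
    fun y => q.eval y - c, fun y => Polynomial.eval y (Polynomial.derivative q), ?_, ?_, ?_, ?_, ?_⟩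
  · intro y
    have h := intervalIntegral.integral_hasDerivAt_right (f := fun t => q.eval t - c)
      ((hqc.sub continuous_const).intervalIntegrable 0 y)
      (hqc.sub continuous_const).stronglyMeasurable.stronglyMeasurableAtFilter
      (hqc.sub continuous_const).continuousAt
    exact h.const_add _
  · exact hqc.sub continuous_const
  · intro y
    simpa using (q.hasDerivAt y).sub_const c
  · have : ∫ t in (0:ℝ)..L, (q.eval t - c) = 0 := by
      rw [intervalIntegral.integral_sub (hqc.intervalIntegrable 0 L)
        intervalIntegrable_const, hcL, intervalIntegral.integral_const, smul_eq_mul]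
      ring
    have h0 : ∫ t in (0:ℝ)..(0:ℝ), (q.eval t - c) = 0 := intervalIntegral.integral_same
    simp only [this, h0]
  · intro y hy
    have hdiffint : (∫ t in (0:ℝ)..y, (q.eval t - c)) - (G y - G 0)
        = ∫ t in (0:ℝ)..y, (q.eval t - c - deriv G t) := by
      rw [← hFTC y, ← intervalIntegral.integral_sub (f := fun t => q.eval t - c)
        (g := fun t => deriv G t)
        ((hqc.sub continuous_const).intervalIntegrable 0 y) (hG'cont.intervalIntegrable 0 y)]
    have hbound : |∫ t in (0:ℝ)..y, (q.eval t - c - deriv G t)| ≤ 2 * ε₁ * L := by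
      have h2 : ‖∫ t in (0:ℝ)..y, (q.eval t - c - deriv G t)‖ ≤ (2 * ε₁) * |y - 0| := by
        refine intervalIntegral.norm_integral_le_of_norm_le_const fun t ht => ?_
        rw [uIoc_of_le hy.1] at ht
        have ht' : t ∈ Icc (0:ℝ) L := ⟨ht.1.le, ht.2.trans hy.2⟩
        have := hqG t ht'
        have habs : |q.eval t - c - deriv G t| ≤ |q.eval t - deriv G t| + |c| := by
          have : q.eval t - c - deriv G t = (q.eval t - deriv G t) + (-c) := by ring
          rw [this]
          exact (abs_add_le _ _).trans (by rw [abs_neg])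
        calc ‖q.eval t - c - deriv G t‖ ≤ |q.eval t - deriv G t| + |c| := habs
          _ ≤ ε₁ + ε₁ := add_le_add (hqG t ht') hcbound
          _ = 2 * ε₁ := by ring
      calc |∫ t in (0:ℝ)..y, (q.eval t - c - deriv G t)| ≤ (2*ε₁) * |y - 0| := h2
        _ ≤ (2*ε₁) * L := by
            rw [sub_zero, abs_of_nonneg hy.1]
            exact mul_le_mul_of_nonneg_left hy.2 (by positivity)
        _ = 2 * ε₁ * L := by ring
    have hgy : G 0 - d + (∫ t in (0:ℝ)..y, (q.eval t - c)) - G y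
        = (∫ t in (0:ℝ)..y, (q.eval t - c - deriv G t)) - d := by
      rw [← hdiffint]; ring
    have hd1 : 4 * ε₁ * L + 2 * ε₁ ≤ ε := by
      have heq : 4 * ε₁ * L + 2 * ε₁ = ε := by
        rw [hε₁def]; field_simp
      exact heq.le
    constructor
    · -- g y < G y
      show G 0 - d + (∫ t in (0:ℝ)..y, (q.eval t - c)) < G y
      have := abs_le.mp hbound
      have h5 : G 0 - d + (∫ t in (0:ℝ)..y, (q.eval t - c)) - G y ≤ 2 * ε₁ * L - d := by
        rw [hgy]; linarith [this.2]
      have : 2 * ε₁ * L - d = -ε₁ := by rw [hddef]; ring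
      linarith [h5, this, hε₁]
    constructor
    · -- G y - ε ≤ g y
      show G y - ε ≤ G 0 - d + (∫ t in (0:ℝ)..y, (q.eval t - c))
      have := abs_le.mp hbound
      have h5 : G 0 - d + (∫ t in (0:ℝ)..y, (q.eval t - c)) - G y ≥ -(2 * ε₁ * L) - d := by
        rw [hgy]; linarith [this.1]
      have h6 : -(2 * ε₁ * L) - d = -(4 * ε₁ * L + ε₁) := by rw [hddef]; ring
      have h7 : 4 * ε₁ * L + ε₁ ≤ ε := by linarith [hd1, hε₁]
      linarith [h5, h6.ge]
    · -- |g' - G'| ≤ ε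
      show |q.eval y - c - deriv G y| ≤ ε
      have habs : |q.eval y - c - deriv G y| ≤ |q.eval y - deriv G y| + |c| := by
        have h : q.eval y - c - deriv G y = (q.eval y - deriv G y) + (-c) := by ring
        rw [h]
        exact (abs_add_le _ _).trans (by rw [abs_neg])
      have : |q.eval y - deriv G y| + |c| ≤ 2 * ε₁ := by
        linarith [hqG y hy, hcbound]
      have h8 : 2 * ε₁ ≤ ε := by linarith [hd1, mul_nonneg (mul_nonneg (by norm_num : (0:ℝ) ≤ 4) hε₁.le) hL.le]
      linarith [habs, this, h8]


lemma measurableSet_under {L β : ℝ} {F : ℝ → ℝ} (hF : Continuous F) :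
    MeasurableSet {p : ℝ × ℝ | p.1 ∈ Ioo 0 L ∧ p.2 ∈ Ioo (-β) (F p.1)} := by
  have h : {p : ℝ × ℝ | p.1 ∈ Ioo 0 L ∧ p.2 ∈ Ioo (-β) (F p.1)}
      = ((fun p : ℝ × ℝ => p.1) ⁻¹' Ioo 0 L) ∩ ({p : ℝ × ℝ | -β < p.2} ∩ {p : ℝ × ℝ | p.2 < F p.1}) := by
    ext p
    simp only [mem_setOf_eq, mem_inter_iff, mem_preimage, mem_Ioo]
    try tauto
  rw [h]
  exact (measurable_fst measurableSet_Ioo).inter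
    (((isOpen_lt continuous_const continuous_snd).measurableSet).inter
      ((isOpen_lt continuous_snd (hF.comp continuous_fst)).measurableSet))

lemma tendsto_set_integral_aux
    {L β : ℝ} (hL : 0 < L)
    {G : ℝ → ℝ} (hGcont : Continuous G)
    {gn : ℕ → ℝ → ℝ} (hgncont : ∀ n, Continuous (gn n))
    {εn : ℕ → ℝ} (hεn : Tendsto εn atTop (𝓝 0))
    (hlow : ∀ n, ∀ y ∈ Icc 0 L, G y - εn n ≤ gn n y)
    (hup : ∀ n, ∀ y ∈ Icc 0 L, gn n y < G y)
    {H : ℝ × ℝ → ℝ} (hHmeas : Measurable H)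
    {C : ℝ} (hC0 : 0 ≤ C)
    (hC : ∀ p : ℝ × ℝ, p.1 ∈ Icc 0 L → p.2 ∈ Icc (-β) (G p.1) → ‖H p‖ ≤ C) :
    Tendsto (fun n => ∫ p in {p : ℝ × ℝ | p.1 ∈ Ioo 0 L ∧ p.2 ∈ Ioo (-β) (gn n p.1)}, H p)
      atTop (𝓝 (∫ p in {p : ℝ × ℝ | p.1 ∈ Ioo 0 L ∧ p.2 ∈ Ioo (-β) (G p.1)}, H p)) := by
  set Y : Set (ℝ × ℝ) := {p : ℝ × ℝ | p.1 ∈ Ioo 0 L ∧ p.2 ∈ Ioo (-β) (G p.1)} with hY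
  set Yn : ℕ → Set (ℝ × ℝ) :=
    fun n => {p : ℝ × ℝ | p.1 ∈ Ioo 0 L ∧ p.2 ∈ Ioo (-β) (gn n p.1)} with hYn
  have hYmeas : MeasurableSet Y := measurableSet_under hGcont
  have hYnmeas : ∀ n, MeasurableSet (Yn n) := fun n => measurableSet_under (hgncont n)
  have hsub : ∀ n, Yn n ⊆ Y := fun n p hp =>
    ⟨hp.1, hp.2.1, hp.2.2.trans (hup n p.1 (Ioo_subset_Icc_self hp.1))⟩
  have hYK : ∀ p ∈ Y, p.1 ∈ Icc 0 L ∧ p.2 ∈ Icc (-β) (G p.1) := fun p hp =>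
    ⟨Ioo_subset_Icc_self hp.1, ⟨hp.2.1.le, hp.2.2.le⟩⟩
  -- boundedness of Y
  obtain ⟨yM, hyM, hM⟩ := isCompact_Icc.exists_isMaxOn ⟨0, left_mem_Icc.mpr hL.le⟩
    hGcont.continuousOn
  have hYsub : Y ⊆ Icc 0 L ×ˢ Icc (-β) (G yM) := fun p hp =>
    ⟨Ioo_subset_Icc_self hp.1, ⟨hp.2.1.le, hp.2.2.le.trans (hM (Ioo_subset_Icc_self hp.1))⟩⟩
  have hYvol : volume Y < ⊤ :=
    lt_of_le_of_lt (measure_mono hYsub) (isCompact_Icc.prod isCompact_Icc).measure_lt_top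
  have hbint : Integrable (Y.indicator fun _ => C) volume := by
    rw [integrable_indicator_iff hYmeas]
    exact integrableOn_const hYvol.ne
  have hmain := tendsto_integral_of_dominated_convergence (μ := volume)
    (F := fun n => (Yn n).indicator H) (f := Y.indicator H)
    (bound := Y.indicator fun _ => C)
    (fun n => (hHmeas.indicator (hYnmeas n)).aestronglyMeasurable)
    hbint
    (fun n => Eventually.of_forall fun p => by
      show ‖(Yn n).indicator H p‖ ≤ Y.indicator (fun _ => C) p
      by_cases hp : p ∈ Yn n
      · rw [indicator_of_mem hp, indicator_of_mem (hsub n hp)]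
        exact hC p (hYK p (hsub n hp)).1 (hYK p (hsub n hp)).2
      · rw [indicator_of_notMem hp]
        simp only [norm_zero]
        exact indicator_nonneg (fun _ _ => hC0) p)
    (Eventually.of_forall fun p => by
      show Tendsto (fun n => (Yn n).indicator H p) atTop (𝓝 (Y.indicator H p))
      by_cases hp : p ∈ Y
      · have hgap : (0:ℝ) < G p.1 - p.2 := sub_pos.2 hp.2.2
        have hev : ∀ᶠ n in atTop, εn n < G p.1 - p.2 := hεn.eventually (gt_mem_nhds hgap)
        have heq : ∀ᶠ n in atTop, ((Yn n).indicator H) p = H p := by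
          refine hev.mono fun n hn => ?_
          refine indicator_of_mem ?_ H
          refine ⟨hp.1, hp.2.1, ?_⟩
          have := hlow n p.1 (Ioo_subset_Icc_self hp.1)
          show p.2 < gn n p.1
          linarith
        rw [indicator_of_mem hp]
        exact Tendsto.congr' (heq.mono fun n hn => hn.symm) tendsto_const_nhds
      · have heq : (fun n => ((Yn n).indicator H) p) = fun _ => (0:ℝ) :=
          funext fun n => indicator_of_notMem (fun hmem => hp (hsub n hmem)) H
        rw [indicator_of_notMem hp, heq]
        exact tendsto_const_nhds)
  have h1 : (fun n => ∫ p in Yn n, H p) = fun n => ∫ p, (Yn n).indicator H p :=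
    funext fun n => (integral_indicator (hYnmeas n)).symm
  rw [hY, hYn] at *
  rw [h1, ← integral_indicator hYmeas]
  exact hmain

lemma tendsto_boundary_aux
    {L β : ℝ} (hL : 0 < L)
    {U : Set (ℝ × ℝ)} (hUopen : IsOpen U)
    {G : ℝ → ℝ} (hG' : Continuous (deriv G))
    (hKU : {p : ℝ × ℝ | p.1 ∈ Icc 0 L ∧ p.2 ∈ Icc (-β) (G p.1)} ⊆ U)
    {gn : ℕ → ℝ → ℝ} (hgncont : ∀ n, Continuous (gn n))
    {g'n : ℕ → ℝ → ℝ} (hg'ncont : ∀ n, Continuous (g'n n))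
    {εn : ℕ → ℝ} (hεn : Tendsto εn atTop (𝓝 0))
    (hlow : ∀ n, ∀ y ∈ Icc 0 L, G y - εn n ≤ gn n y)
    (hup : ∀ n, ∀ y ∈ Icc 0 L, gn n y < G y)
    (hbl : ∀ n, ∀ y ∈ Icc 0 L, -β ≤ gn n y)
    (hd : ∀ n, ∀ y ∈ Icc 0 L, |g'n n y - deriv G y| ≤ εn n)
    {C2 : ℝ} (hg'b : ∀ n, ∀ y ∈ Icc 0 L, |g'n n y| ≤ C2)
    {P Q : ℝ × ℝ → ℝ} (hP : ContinuousOn P U) (hQ : ContinuousOn Q U)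
    {CP CQ : ℝ}
    (hCP : ∀ p : ℝ × ℝ, p.1 ∈ Icc 0 L → p.2 ∈ Icc (-β) (G p.1) → ‖P p‖ ≤ CP)
    (hCQ : ∀ p : ℝ × ℝ, p.1 ∈ Icc 0 L → p.2 ∈ Icc (-β) (G p.1) → ‖Q p‖ ≤ CQ) :
    Tendsto (fun n => ∫ y in (0:ℝ)..L, (Q (y, gn n y) - g'n n y * P (y, gn n y))) atTop
      (𝓝 (∫ y in (0:ℝ)..L, (Q (y, G y) - deriv G y * P (y, G y)))) := by
  have hmem : ∀ n, ∀ y ∈ Icc (0:ℝ) L, ((y : ℝ), gn n y) ∈ U := fun n y hy =>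
    hKU ⟨hy, ⟨hbl n y hy, (hup n y hy).le⟩⟩
  have hmemG : ∀ y ∈ Icc (0:ℝ) L, ((y : ℝ), G y) ∈ U := fun y hy => by
    refine hKU ⟨hy, ⟨?_, le_refl _⟩⟩
    have h1 := hbl 0 y hy
    have h2 := hup 0 y hy
    linarith
  have hC20 : 0 ≤ C2 := (abs_nonneg _).trans (hg'b 0 0 (left_mem_Icc.mpr hL.le))
  have hCP0 : 0 ≤ CP := by
    have h1 := hbl 0 0 (left_mem_Icc.mpr hL.le)
    have h2 := hup 0 0 (left_mem_Icc.mpr hL.le)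
    refine (norm_nonneg _).trans (hCP (0, G 0) (left_mem_Icc.mpr hL.le) ?_)
    refine ⟨?_, ?_⟩
    · show -β ≤ G 0
      linarith
    · show G 0 ≤ G 0
      exact le_refl _
  have hFncont : ∀ n, ContinuousOn
      (fun y => Q (y, gn n y) - g'n n y * P (y, gn n y)) (Icc (0:ℝ) L) := by
    intro n
    refine ContinuousOn.sub ?_ (ContinuousOn.mul (hg'ncont n).continuousOn ?_)
    · exact hQ.comp ((continuous_id.prodMk (hgncont n)).continuousOn) (hmem n)
    · exact hP.comp ((continuous_id.prodMk (hgncont n)).continuousOn) (hmem n)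
  rw [intervalIntegral.integral_of_le hL.le]
  have hrw : (fun n => ∫ y in (0:ℝ)..L, (Q (y, gn n y) - g'n n y * P (y, gn n y)))
      = fun n => ∫ y in Ioc (0:ℝ) L, (Q (y, gn n y) - g'n n y * P (y, gn n y)) :=
    funext fun n => intervalIntegral.integral_of_le hL.le
  rw [hrw]
  refine tendsto_integral_of_dominated_convergence (bound := fun _ => CQ + C2 * CP)
    (fun n => ((hFncont n).mono Ioc_subset_Icc_self).aestronglyMeasurable measurableSet_Ioc)
    ?_ ?_ ?_
  · exact integrableOn_const measure_Ioc_lt_top.ne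
  · intro n
    refine (ae_restrict_iff' measurableSet_Ioc).2 (Eventually.of_forall fun y hy => ?_)
    have hy' : y ∈ Icc (0:ℝ) L := Ioc_subset_Icc_self hy
    have hb1 : ‖Q (y, gn n y)‖ ≤ CQ := hCQ _ hy' ⟨hbl n y hy', (hup n y hy').le⟩
    have hb2 : ‖P (y, gn n y)‖ ≤ CP := hCP _ hy' ⟨hbl n y hy', (hup n y hy').le⟩
    have hb3 : |g'n n y| ≤ C2 := hg'b n y hy'
    calc ‖Q (y, gn n y) - g'n n y * P (y, gn n y)‖
        ≤ ‖Q (y, gn n y)‖ + ‖g'n n y * P (y, gn n y)‖ := norm_sub_le _ _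
      _ ≤ CQ + C2 * CP := by
          rw [norm_mul]
          exact add_le_add hb1 (mul_le_mul hb3 hb2 (norm_nonneg _) hC20)
  · refine (ae_restrict_iff' measurableSet_Ioc).2 (Eventually.of_forall fun y hy => ?_)
    have hy' : y ∈ Icc (0:ℝ) L := Ioc_subset_Icc_self hy
    have h1 : Tendsto (fun n => gn n y) atTop (𝓝 (G y)) := by
      have hlo : Tendsto (fun n => G y - εn n) atTop (𝓝 (G y)) := by
        simpa using tendsto_const_nhds.sub hεn
      exact tendsto_of_tendsto_of_tendsto_of_le_of_le hlo tendsto_const_nhds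
        (fun n => hlow n y hy') (fun n => (hup n y hy').le)
    have h2 : Tendsto (fun n => g'n n y) atTop (𝓝 (deriv G y)) := by
      have hlo : Tendsto (fun n => deriv G y - εn n) atTop (𝓝 (deriv G y)) := by
        simpa using tendsto_const_nhds.sub hεn
      have hhi : Tendsto (fun n => deriv G y + εn n) atTop (𝓝 (deriv G y)) := by
        simpa using tendsto_const_nhds.add hεn
      refine tendsto_of_tendsto_of_tendsto_of_le_of_le hlo hhi ?_ ?_
      · intro n
        show deriv G y - εn n ≤ g'n n y
        have := abs_le.mp (hd n y hy'); linarith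
      · intro n
        show g'n n y ≤ deriv G y + εn n
        have := abs_le.mp (hd n y hy'); linarith
    have hpt : Tendsto (fun n => ((y:ℝ), gn n y)) atTop (𝓝 (y, G y)) :=
      tendsto_const_nhds.prodMk_nhds h1
    have hQat : ContinuousAt Q (y, G y) := hQ.continuousAt (hUopen.mem_nhds (hmemG y hy'))
    have hPat : ContinuousAt P (y, G y) := hP.continuousAt (hUopen.mem_nhds (hmemG y hy'))
    exact (hQat.tendsto.comp hpt).sub (h2.mul (hPat.tendsto.comp hpt))

/-- Energy identity for the cell problem: if `X` is `C¹` on a neighborhood of the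
closed band `{(y,z) : -β ≤ z ≤ G(y)}`, `L`-periodic in `y`, harmonic on the open band, and
satisfies the Neumann conditions `∂_z X(y,-β) = 0` and
`∂_z X(y,G(y)) - G'(y) ∂_y X(y,G(y)) = -G'(y)`, then
`∫_{Y*} ((∂_y X)² + (∂_z X)²) = ∫_{Y*} ∂_y X`, where
`Y* = {(y,z) : 0 < y < L, -β < z < G(y)}`. -/
theorem stmt_4 (L β : ℝ) (hL : 0 < L) (hβ : 0 ≤ β)
    (G : ℝ → ℝ) (hGC1 : ContDiff ℝ 1 G) (hGper : ∀ y, G (y + L) = G y)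
    (hGpos : ∀ y, 0 < G y)
    (X : ℝ × ℝ → ℝ)
    (hX : ∃ U : Set (ℝ × ℝ), IsOpen U ∧
      {p : ℝ × ℝ | -β ≤ p.2 ∧ p.2 ≤ G p.1} ⊆ U ∧ ContDiffOn ℝ 1 X U)
    (hXtwice : ∀ p : ℝ × ℝ, -β < p.2 → p.2 < G p.1 →
      DifferentiableAt ℝ (fun q : ℝ × ℝ => fderiv ℝ X q (1, 0)) p ∧
      DifferentiableAt ℝ (fun q : ℝ × ℝ => fderiv ℝ X q (0, 1)) p)
    (hXharm : ∀ p : ℝ × ℝ, -β < p.2 → p.2 < G p.1 →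
      fderiv ℝ (fun q : ℝ × ℝ => fderiv ℝ X q (1, 0)) p (1, 0)
        + fderiv ℝ (fun q : ℝ × ℝ => fderiv ℝ X q (0, 1)) p (0, 1) = 0)
    (hXper : ∀ y z : ℝ, X (y + L, z) = X (y, z))
    (hXlower : ∀ y : ℝ, fderiv ℝ X (y, -β) (0, 1) = 0)
    (hXupper : ∀ y : ℝ,
      fderiv ℝ X (y, G y) (0, 1) - deriv G y * fderiv ℝ X (y, G y) (1, 0) = -deriv G y) :
    ∫ p in {p : ℝ × ℝ | p.1 ∈ Ioo 0 L ∧ p.2 ∈ Ioo (-β) (G p.1)},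
        (fderiv ℝ X p (1, 0) ^ 2 + fderiv ℝ X p (0, 1) ^ 2)
      = ∫ p in {p : ℝ × ℝ | p.1 ∈ Ioo 0 L ∧ p.2 ∈ Ioo (-β) (G p.1)}, fderiv ℝ X p (1, 0) := by
  classical
  obtain ⟨U, hUopen, hKU0, hXC1⟩ := hX
  have hGcont : Continuous G := hGC1.continuous
  have hG'cont : Continuous (deriv G) := hGC1.continuous_deriv le_rfl
  have hGL : G L = G 0 := by simpa using hGper 0
  obtain ⟨ym, hym, hmin⟩ := isCompact_Icc.exists_isMinOn ⟨0, left_mem_Icc.mpr hL.le⟩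
    hGcont.continuousOn
  set m := G ym with hm
  have hm0 : 0 < m := hGpos ym
  have hminle : ∀ y ∈ Icc (0:ℝ) L, m ≤ G y := fun y hy => hmin hy
  have hbandU : {p : ℝ × ℝ | p.1 ∈ Icc 0 L ∧ p.2 ∈ Icc (-β) (G p.1)} ⊆ U := fun p hp =>
    hKU0 ⟨hp.2.1, hp.2.2⟩
  have hUdiff : ∀ p ∈ U, DifferentiableAt ℝ X p := fun p hp =>
    (hXC1.differentiableOn one_ne_zero).differentiableAt (hUopen.mem_nhds hp)
  have hfd : ContinuousOn (fun p => fderiv ℝ X p) U :=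
    hXC1.continuousOn_fderiv_of_isOpen hUopen le_rfl
  have hXycont : ContinuousOn (fun p : ℝ × ℝ => fderiv ℝ X p (1, 0)) U :=
    hfd.clm_apply continuousOn_const
  have hXzcont : ContinuousOn (fun p : ℝ × ℝ => fderiv ℝ X p (0, 1)) U :=
    hfd.clm_apply continuousOn_const
  have hXcont : ContinuousOn X U := hXC1.continuousOn
  set W : ℝ × ℝ → ℝ := fun p => X p * fderiv ℝ X p (1, 0) with hWdef
  set V : ℝ × ℝ → ℝ := fun p => X p * fderiv ℝ X p (0, 1) with hVdef
  set D : ℝ × ℝ → ℝ := fun p => fderiv ℝ X p (1, 0) ^ 2 + fderiv ℝ X p (0, 1) ^ 2 with hDdef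
  set Xy1 : ℝ × ℝ → ℝ := fun p => fderiv ℝ X p (1, 0) with hXy1def
  have hWcont : ContinuousOn W U := hXcont.mul hXycont
  have hVcont : ContinuousOn V U := hXcont.mul hXzcont
  have hDcont : ContinuousOn D U := (hXycont.pow 2).add (hXzcont.pow 2)
  -- derivative data for the two vector fields
  set P'A : ℝ × ℝ → (ℝ × ℝ →L[ℝ] ℝ) := fun p =>
    X p • fderiv ℝ (fun q : ℝ × ℝ => fderiv ℝ X q (1, 0)) p
      + fderiv ℝ X p (1, 0) • fderiv ℝ X p with hP'Adef
  set Q'A : ℝ × ℝ → (ℝ × ℝ →L[ℝ] ℝ) := fun p =>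
    X p • fderiv ℝ (fun q : ℝ × ℝ => fderiv ℝ X q (0, 1)) p
      + fderiv ℝ X p (0, 1) • fderiv ℝ X p with hQ'Adef
  have hderA : ∀ p : ℝ × ℝ, -β < p.2 → p.2 < G p.1 →
      HasFDerivAt W (P'A p) p ∧ HasFDerivAt V (Q'A p) p := by
    intro p h1 h2
    have hpU : p ∈ U := hKU0 ⟨h1.le, h2.le⟩
    have hXd : DifferentiableAt ℝ X p := hUdiff p hpU
    have h := hXtwice p h1 h2
    exact ⟨hXd.hasFDerivAt.mul h.1.hasFDerivAt, hXd.hasFDerivAt.mul h.2.hasFDerivAt⟩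
  have hdivA : ∀ p : ℝ × ℝ, -β < p.2 → p.2 < G p.1 → P'A p (1, 0) + Q'A p (0, 1) = D p := by
    intro p h1 h2
    have hh := hXharm p h1 h2
    rw [hP'Adef, hQ'Adef, hDdef]
    simp only [ContinuousLinearMap.add_apply, ContinuousLinearMap.coe_smul', Pi.smul_apply,
      smul_eq_mul]
    linear_combination X p * hh
  -- periodicity
  have hper : ∀ z : ℝ, -β ≤ z → z ≤ G 0 →
      X (L, z) = X (0, z) ∧ fderiv ℝ X (L, z) = fderiv ℝ X (0, z) := by
    intro z hz1 hz2
    have hzL : ((L : ℝ), z) ∈ U := hKU0 ⟨hz1, by show z ≤ G L; rw [hGL]; exact hz2⟩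
    have hXdL : DifferentiableAt ℝ X (L, z) := hUdiff _ hzL
    have hXeq : X (L, z) = X (0, z) := by
      have := hXper 0 z
      simpa using this
    refine ⟨hXeq, ?_⟩
    have heqf : (fun p : ℝ × ℝ => X (p + (L, 0))) = X := by
      funext p
      have h : p + ((L : ℝ), (0 : ℝ)) = (p.1 + L, p.2) := by
        refine Prod.ext ?_ ?_ <;> simp
      rw [h, hXper p.1 p.2]
    have htr : HasFDerivAt (fun p : ℝ × ℝ => X (p + (L, 0))) (fderiv ℝ X (L, z)) (0, z) := by
      have h2 : HasFDerivAt (fun p : ℝ × ℝ => p + ((L : ℝ), (0 : ℝ)))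
          (ContinuousLinearMap.id ℝ (ℝ × ℝ)) ((0 : ℝ), z) := (hasFDerivAt_id _).add_const _
      have hpt : ((0 : ℝ), z) + ((L : ℝ), (0 : ℝ)) = ((L : ℝ), z) := by
        refine Prod.ext ?_ ?_ <;> simp
      have h1 : HasFDerivAt X (fderiv ℝ X (L, z)) (((0 : ℝ), z) + ((L : ℝ), (0 : ℝ))) := by
        rw [hpt]; exact hXdL.hasFDerivAt
      have := h1.comp ((0 : ℝ), z) h2
      exact this
    rw [heqf] at htr
    exact htr.fderiv.symm
  -- approximations
  have hεpos : ∀ n : ℕ, (0:ℝ) < m / (n + 2) := fun n => by positivity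
  choose gn g'n g''n hgder hg'cont hg''der hgLn hprop using
    fun n : ℕ => approx_lemma L hL G hGC1 hGL (hεpos n)
  set εn : ℕ → ℝ := fun n => m / (n + 2) with hεdef
  have hεn : Tendsto εn atTop (𝓝 0) := by
    refine Tendsto.div_atTop tendsto_const_nhds ?_
    exact tendsto_atTop_add_const_right _ 2 tendsto_natCast_atTop_atTop
  have hsmall : ∀ n : ℕ, εn n ≤ m / 2 := fun n => by
    rw [hεdef]
    refine div_le_div_of_nonneg_left hm0.le (by norm_num) ?_
    have : (0:ℝ) ≤ (n:ℝ) := Nat.cast_nonneg n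
    linarith
  have hgncont : ∀ n, Continuous (gn n) := by
    intro n
    have hdn : Differentiable ℝ (gn n) := fun y => (hgder n y).differentiableAt
    exact hdn.continuous
  have hup : ∀ n, ∀ y ∈ Icc (0:ℝ) L, gn n y < G y := fun n y hy => (hprop n y hy).1
  have hlow : ∀ n, ∀ y ∈ Icc (0:ℝ) L, G y - εn n ≤ gn n y := fun n y hy => (hprop n y hy).2.1
  have hdd : ∀ n, ∀ y ∈ Icc (0:ℝ) L, |g'n n y - deriv G y| ≤ εn n := fun n y hy =>
    (hprop n y hy).2.2
  have hgpos' : ∀ n, ∀ y ∈ Icc (0:ℝ) L, -β < gn n y := by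
    intro n y hy
    have h1 := hminle y hy
    have h2 := hlow n y hy
    have h3 := hsmall n
    linarith
  have hbl : ∀ n, ∀ y ∈ Icc (0:ℝ) L, -β ≤ gn n y := fun n y hy => (hgpos' n y hy).le
  have hKUn : ∀ n, {p : ℝ × ℝ | p.1 ∈ Icc 0 L ∧ p.2 ∈ Icc (-β) (gn n p.1)} ⊆ U :=
    fun n p hp => hbandU ⟨hp.1, hp.2.1, hp.2.2.trans (hup n p.1 hp.1).le⟩
  -- compact band and bounds
  set Kband : Set (ℝ × ℝ) := {p : ℝ × ℝ | p.1 ∈ Icc 0 L ∧ p.2 ∈ Icc (-β) (G p.1)} with hKbdef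
  have hKclosed : IsClosed Kband := by
    have h : Kband = ((fun p : ℝ × ℝ => p.1) ⁻¹' Icc 0 L) ∩
        ({p : ℝ × ℝ | -β ≤ p.2} ∩ {p : ℝ × ℝ | p.2 ≤ G p.1}) := by
      ext p
      simp only [hKbdef, mem_setOf_eq, mem_inter_iff, mem_preimage, mem_Icc]
      try tauto
    rw [h]
    exact (isClosed_Icc.preimage continuous_fst).inter
      ((isClosed_le continuous_const continuous_snd).inter
        (isClosed_le continuous_snd (hGcont.comp continuous_fst)))
  obtain ⟨yM, hyM, hMax⟩ := isCompact_Icc.exists_isMaxOn ⟨0, left_mem_Icc.mpr hL.le⟩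
    hGcont.continuousOn
  have hKcomp : IsCompact Kband := by
    refine IsCompact.of_isClosed_subset
      ((isCompact_Icc (a := (0:ℝ)) (b := L)).prod (isCompact_Icc (a := -β) (b := G yM)))
      hKclosed ?_
    exact fun p hp => ⟨hp.1, hp.2.1, hp.2.2.trans (hMax hp.1)⟩
  obtain ⟨CW, hCW⟩ := hKcomp.exists_bound_of_continuousOn (hWcont.mono hbandU)
  obtain ⟨CV, hCV⟩ := hKcomp.exists_bound_of_continuousOn (hVcont.mono hbandU)
  obtain ⟨CD, hCD⟩ := hKcomp.exists_bound_of_continuousOn (hDcont.mono hbandU)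
  obtain ⟨CX, hCX⟩ := hKcomp.exists_bound_of_continuousOn (hXcont.mono hbandU)
  obtain ⟨CXy, hCXy⟩ := hKcomp.exists_bound_of_continuousOn (hXycont.mono hbandU)
  obtain ⟨CG', hCG'⟩ := isCompact_Icc.exists_bound_of_continuousOn hG'cont.continuousOn
  have hg'b : ∀ n, ∀ y ∈ Icc (0:ℝ) L, |g'n n y| ≤ CG' + m := by
    intro n y hy
    have h1 := hdd n y hy
    have h2 := hCG' y hy
    have h3 := hsmall n
    have h4 : |g'n n y| ≤ |g'n n y - deriv G y| + |deriv G y| := by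
      have h := abs_add_le (g'n n y - deriv G y) (deriv G y)
      simpa using h
    have h5 : |deriv G y| = ‖deriv G y‖ := rfl
    linarith [h4, h1, h2, hm0]
  -- measurability
  have hDmeas : Measurable D := ((measurable_fderiv_apply_const ℝ X (1, 0)).pow_const 2).add
    ((measurable_fderiv_apply_const ℝ X (0, 1)).pow_const 2)
  have hXymeas : Measurable Xy1 := measurable_fderiv_apply_const ℝ X (1, 0)
  -- identity for each n : field A
  have hbot0 : (fun y : ℝ => V (y, -β)) = fun _ => (0:ℝ) := by
    funext y
    show X (y, -β) * fderiv ℝ X (y, -β) (0, 1) = 0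
    rw [hXlower y]; ring
  have hEqA : ∀ n, ∫ p in {p : ℝ × ℝ | p.1 ∈ Ioo 0 L ∧ p.2 ∈ Ioo (-β) (gn n p.1)}, D p
      = ∫ y in (0:ℝ)..L, (V (y, gn n y) - g'n n y * W (y, gn n y)) := by
    intro n
    have h := key_identity hL hUopen (hgder n) (hg'cont n) (fun y _ => hg''der n y)
      (hgLn n) (hgpos' n) (hKUn n) hWcont hVcont hDcont
      (fun p h1 h2 => hderA p h2.1 (h2.2.trans (hup n p.1 (Ioo_subset_Icc_self h1))))
      (fun p h1 h2 => hdivA p h2.1 (h2.2.trans (hup n p.1 (Ioo_subset_Icc_self h1))))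
      (fun z hz => by
        have hz2 : z ≤ G 0 := hz.2.trans (hup n 0 (left_mem_Icc.mpr hL.le)).le
        have hp := hper z hz.1 hz2
        show X (L, z) * fderiv ℝ X (L, z) (1, 0) = X (0, z) * fderiv ℝ X (0, z) (1, 0)
        rw [hp.1, hp.2])
    rw [h, hbot0, intervalIntegral.integral_zero, sub_zero]
  -- identity for each n : field B
  have hEqB : ∀ n, ∫ p in {p : ℝ × ℝ | p.1 ∈ Ioo 0 L ∧ p.2 ∈ Ioo (-β) (gn n p.1)}, Xy1 p
      = ∫ y in (0:ℝ)..L, ((fun _ : ℝ × ℝ => (0:ℝ)) (y, gn n y) - g'n n y * X (y, gn n y)) := by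
    intro n
    have h := key_identity (P := X) (Q := fun _ : ℝ × ℝ => (0:ℝ)) (DIV := Xy1)
      (P' := fun p => fderiv ℝ X p) (Q' := fun _ => 0)
      hL hUopen (hgder n) (hg'cont n) (fun y _ => hg''der n y)
      (hgLn n) (hgpos' n) (hKUn n) hXcont continuousOn_const hXycont
      (fun p h1 h2 => ⟨(hUdiff p (hKUn n ⟨Ioo_subset_Icc_self h1,
          ⟨h2.1.le, h2.2.le⟩⟩)).hasFDerivAt, hasFDerivAt_const 0 p⟩)
      (fun p h1 h2 => by simp [hXy1def])
      (fun z hz => by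
        have hz2 : z ≤ G 0 := hz.2.trans (hup n 0 (left_mem_Icc.mpr hL.le)).le
        exact (hper z hz.1 hz2).1)
    rw [h, intervalIntegral.integral_zero, sub_zero]
  -- limits
  have hTendA : Tendsto (fun n => ∫ p in {p : ℝ × ℝ | p.1 ∈ Ioo 0 L ∧
      p.2 ∈ Ioo (-β) (gn n p.1)}, D p) atTop
      (𝓝 (∫ p in {p : ℝ × ℝ | p.1 ∈ Ioo 0 L ∧ p.2 ∈ Ioo (-β) (G p.1)}, D p)) :=
    tendsto_set_integral_aux hL hGcont hgncont hεn hlow hup hDmeas (abs_nonneg CD)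
      (fun p h1 h2 => (hCD p ⟨h1, h2⟩).trans (le_abs_self _))
  have hTendB : Tendsto (fun n => ∫ p in {p : ℝ × ℝ | p.1 ∈ Ioo 0 L ∧
      p.2 ∈ Ioo (-β) (gn n p.1)}, Xy1 p) atTop
      (𝓝 (∫ p in {p : ℝ × ℝ | p.1 ∈ Ioo 0 L ∧ p.2 ∈ Ioo (-β) (G p.1)}, Xy1 p)) :=
    tendsto_set_integral_aux hL hGcont hgncont hεn hlow hup hXymeas (abs_nonneg CXy)
      (fun p h1 h2 => (hCXy p ⟨h1, h2⟩).trans (le_abs_self _))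
  have hTendA' : Tendsto (fun n => ∫ y in (0:ℝ)..L, (V (y, gn n y) - g'n n y * W (y, gn n y)))
      atTop (𝓝 (∫ y in (0:ℝ)..L, (V (y, G y) - deriv G y * W (y, G y)))) :=
    tendsto_boundary_aux hL hUopen hG'cont hbandU hgncont hg'cont hεn hlow hup hbl hdd hg'b
      hWcont hVcont (fun p h1 h2 => hCW p ⟨h1, h2⟩) (fun p h1 h2 => hCV p ⟨h1, h2⟩)
  have hTendB' : Tendsto (fun n => ∫ y in (0:ℝ)..L,
      ((fun _ : ℝ × ℝ => (0:ℝ)) (y, gn n y) - g'n n y * X (y, gn n y)))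
      atTop (𝓝 (∫ y in (0:ℝ)..L,
        ((fun _ : ℝ × ℝ => (0:ℝ)) (y, G y) - deriv G y * X (y, G y)))) :=
    tendsto_boundary_aux (CQ := 0) hL hUopen hG'cont hbandU hgncont hg'cont hεn hlow hup hbl
      hdd hg'b hXcont continuousOn_const (fun p h1 h2 => hCX p ⟨h1, h2⟩)
      (fun p _ _ => by simp)
  have hlimA : ∫ p in {p : ℝ × ℝ | p.1 ∈ Ioo 0 L ∧ p.2 ∈ Ioo (-β) (G p.1)}, D p
      = ∫ y in (0:ℝ)..L, (V (y, G y) - deriv G y * W (y, G y)) :=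
    tendsto_nhds_unique (Tendsto.congr hEqA hTendA) hTendA'
  have hlimB : ∫ p in {p : ℝ × ℝ | p.1 ∈ Ioo 0 L ∧ p.2 ∈ Ioo (-β) (G p.1)}, Xy1 p
      = ∫ y in (0:ℝ)..L, ((fun _ : ℝ × ℝ => (0:ℝ)) (y, G y) - deriv G y * X (y, G y)) :=
    tendsto_nhds_unique (Tendsto.congr hEqB hTendB) hTendB'
  show (∫ p in {p : ℝ × ℝ | p.1 ∈ Ioo 0 L ∧ p.2 ∈ Ioo (-β) (G p.1)}, D p)
      = ∫ p in {p : ℝ × ℝ | p.1 ∈ Ioo 0 L ∧ p.2 ∈ Ioo (-β) (G p.1)}, Xy1 p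
  rw [hlimA, hlimB]
  refine intervalIntegral.integral_congr fun y hy => ?_
  show X (y, G y) * fderiv ℝ X (y, G y) (0, 1)
      - deriv G y * (X (y, G y) * fderiv ℝ X (y, G y) (1, 0))
      = 0 - deriv G y * X (y, G y)
  linear_combination X (y, G y) * hXupper y
end

section
/- Let L > 0, b₁ ≥ 0, G₁ > 0, and let F : ℝ² → ℝ be measurable with F(y + L, z) = F(y, z) for all (y,z) and M := ∫_{(0,L) × (−b₁, G₁)} F(y,z)² dy dz < ∞. Then for every ε ∈ (0,1] and every measurable set R ⊂ (0,1) × (−ε b₁, ε G₁), one has ∫_R F(x₁/ε, x₂/ε)² dx₁ dx₂ ≤ ε (1/L + 1) M. -/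
open MeasureTheory Set
open scoped ENNReal

/-- Iterated periodicity. -/
lemma stmt8_aux_periodic (L : ℝ) (F : ℝ × ℝ → ℝ)
    (hper : ∀ y z : ℝ, F (y + L, z) = F (y, z)) :
    ∀ (k : ℕ) (y z : ℝ), F (y + k * L, z) = F (y, z) := by
  intro k
  induction k with
  | zero => simp
  | succ n ih =>
    intro y z
    have h : y + ((n : ℝ) + 1) * L = (y + n * L) + L := by ring
    have : ((n + 1 : ℕ) : ℝ) = (n : ℝ) + 1 := by push_cast; ring
    rw [this, h, hper, ih]

/-- Scaling estimate for an `L`-periodic square-integrable function rescaled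
into a thin strip: for every `ε ∈ (0,1]` and every measurable
`R ⊆ (0,1) × (-ε b₁, ε G₁)`, `∫_R F(x₁/ε, x₂/ε)² ≤ ε (1/L + 1) M` where
`M = ∫_{(0,L)×(-b₁,G₁)} F²`. -/
theorem stmt_8 (L b₁ G₁ : ℝ) (hL : 0 < L) (hb₁ : 0 ≤ b₁) (hG₁ : 0 < G₁)
    (F : ℝ × ℝ → ℝ) (hF : Measurable F)
    (hper : ∀ y z : ℝ, F (y + L, z) = F (y, z))
    (hint : IntegrableOn (fun p => F p ^ 2) (Ioo 0 L ×ˢ Ioo (-b₁) G₁)) :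
    ∀ ε ∈ Ioc (0 : ℝ) 1, ∀ R : Set (ℝ × ℝ), MeasurableSet R →
      R ⊆ Ioo (0 : ℝ) 1 ×ˢ Ioo (-(ε * b₁)) (ε * G₁) →
      ∫ p in R, F (p.1 / ε, p.2 / ε) ^ 2
        ≤ ε * (1 / L + 1) * ∫ p in Ioo 0 L ×ˢ Ioo (-b₁) G₁, F p ^ 2 := by
  rintro ε ⟨hε0, hε1⟩ R hR hsub
  set I : Set ℝ := Ioo (-b₁) G₁ with hI
  set S0 : Set (ℝ × ℝ) := Ioo 0 L ×ˢ I with hS0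
  set M : ℝ := ∫ p in S0, F p ^ 2 with hMdef
  have hM0 : 0 ≤ M := integral_nonneg fun p => sq_nonneg _
  set G : ℝ × ℝ → ℝ≥0∞ := fun p => ENNReal.ofReal (F p ^ 2) with hGdef
  have hG : Measurable G := (hF.pow_const 2).ennreal_ofReal
  have hεne : ε ≠ 0 := hε0.ne'
  set n₀ : ℕ := ⌈(ε * L)⁻¹⌉₊ with hn₀
  -- the scaling map
  set σ : ℝ × ℝ → ℝ × ℝ := fun p => ε⁻¹ • p with hσdef
  have hσmeas : Measurable σ := measurable_const_smul _
  have hσcoord : ∀ p : ℝ × ℝ, σ p = (p.1 / ε, p.2 / ε) := by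
    intro p
    simp [hσdef, Prod.ext_iff, div_eq_inv_mul, smul_eq_mul]
  -- target region
  set T : Set (ℝ × ℝ) := Ioo 0 ε⁻¹ ×ˢ I with hT
  have hTmeas : MeasurableSet T := (measurableSet_Ioo).prod measurableSet_Ioo
  have hsub' : R ⊆ σ ⁻¹' T := by
    intro p hp
    obtain ⟨⟨hp1, hp2⟩, hq1, hq2⟩ := hsub hp
    rw [mem_preimage, hσcoord]
    have hεinv : (0 : ℝ) < ε⁻¹ := inv_pos.mpr hε0
    refine ⟨⟨by positivity, ?_⟩, ?_, ?_⟩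
    · rw [div_lt_iff₀ hε0]
      calc p.1 < 1 := hp2
      _ = ε⁻¹ * ε := by field_simp
    · rw [lt_div_iff₀ hε0]
      calc -b₁ * ε = -(ε * b₁) := by ring
      _ < p.2 := hq1
    · rw [div_lt_iff₀ hε0]
      calc p.2 < ε * G₁ := hq2
      _ = G₁ * ε := by ring
  -- strips
  set st : ℕ → Set (ℝ × ℝ) := fun k => Ico ((k : ℝ) * L) (((k : ℝ) + 1) * L) ×ˢ I with hst
  have hstmeas : ∀ k, MeasurableSet (st k) := fun k => measurableSet_Ico.prod measurableSet_Ioo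
  -- each strip integral equals the base one
  have hM' : ∀ k : ℕ, ∫⁻ p in st k, G p = ∫⁻ p in S0, G p := by
    intro k
    set τ : ℝ × ℝ → ℝ × ℝ := fun p => (p.1 + (k : ℝ) * L, p.2) with hτ
    have hτmeas : Measurable τ := (measurable_fst.add_const _).prodMk measurable_snd
    have hmp : MeasurePreserving τ (volume : Measure (ℝ × ℝ)) volume := by
      have := (measurePreserving_add_right (volume : Measure ℝ) ((k : ℝ) * L)).prod
        (MeasurePreserving.id (volume : Measure ℝ))
      exact this
    have hpre : τ ⁻¹' (st k) = Ico 0 L ×ˢ I := by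
      ext ⟨y, z⟩
      simp only [hst, mem_preimage, hτ, mem_prod, mem_Ico]
      constructor
      · rintro ⟨⟨h1, h2⟩, h3⟩
        exact ⟨⟨by linarith, by nlinarith⟩, h3⟩
      · rintro ⟨⟨h1, h2⟩, h3⟩
        exact ⟨⟨by linarith, by nlinarith⟩, h3⟩
    have hGτ : ∀ p : ℝ × ℝ, G (τ p) = G p := by
      intro p
      simp only [hGdef, hτ]
      rw [stmt8_aux_periodic L F hper k p.1 p.2]
    have step1 : ∫⁻ p in st k, G p = ∫⁻ p in Ico 0 L ×ˢ I, G p := by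
      conv_lhs => rw [← hmp.map_eq]
      rw [setLIntegral_map (hstmeas k) hG hτmeas, hpre]
      exact lintegral_congr fun p => hGτ p
    rw [step1]
    apply setLIntegral_congr
    rw [ae_eq_set]
    constructor
    · apply measure_mono_null (t := ({(0 : ℝ)} ×ˢ I : Set (ℝ × ℝ)))
      · rintro ⟨y, z⟩ ⟨⟨⟨hy0, hyL⟩, hz⟩, hnot⟩
        refine ⟨?_, hz⟩
        simp only [mem_singleton_iff]
        by_contra hy
        exact hnot ⟨⟨lt_of_le_of_ne hy0 (Ne.symm hy), hyL⟩, hz⟩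
      · rw [show (volume : Measure (ℝ × ℝ)) = (volume : Measure ℝ).prod volume from rfl,
          Measure.prod_prod]
        simp
    · have : (Ioo 0 L ×ˢ I : Set (ℝ × ℝ)) \ (Ico 0 L ×ˢ I) = ∅ :=
        diff_eq_empty.mpr (prod_mono Ioo_subset_Ico_self subset_rfl)
      rw [this]; exact measure_empty
  -- coverage of T by the strips
  have hcover : T ⊆ ⋃ k ∈ Finset.range n₀, st k := by
    rintro ⟨y, z⟩ ⟨⟨hy0, hyε⟩, hz⟩
    have hyL : 0 ≤ y / L := by positivity
    set k : ℕ := ⌊y / L⌋₊ with hk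
    have h1 : (k : ℝ) ≤ y / L := Nat.floor_le hyL
    have h2 : y / L < (k : ℝ) + 1 := Nat.lt_floor_add_one _
    have hkn : k < n₀ := by
      have h3 : y / L < (ε * L)⁻¹ := by
        have h3' : y / L < ε⁻¹ / L := by gcongr
        have : (ε * L)⁻¹ = ε⁻¹ / L := by rw [mul_inv, div_eq_mul_inv]
        rw [this]; exact h3'
      have h4 : ((ε * L)⁻¹ : ℝ) ≤ n₀ := Nat.le_ceil _
      have : (k : ℝ) < (n₀ : ℝ) := lt_of_le_of_lt h1 (lt_of_lt_of_le h3 h4)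
      exact_mod_cast this
    refine mem_biUnion (Finset.mem_range.mpr hkn) ?_
    refine ⟨⟨?_, ?_⟩, hz⟩
    · rw [← le_div_iff₀ hL]; exact h1
    · rw [← div_lt_iff₀ hL]; exact h2
  -- pairwise disjointness of strips
  have hdisj : (↑(Finset.range n₀) : Set ℕ).PairwiseDisjoint st := by
    intro j _ k _ hjk
    apply Disjoint.set_prod_left
    rw [Ico_disjoint_Ico]
    rcases hjk.lt_or_gt with h | h
    · have : ((j : ℝ) + 1) * L ≤ (k : ℝ) * L := by
        have : ((j : ℝ) + 1) ≤ (k : ℝ) := by exact_mod_cast Nat.succ_le_of_lt h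
        nlinarith
      calc min (((j : ℝ) + 1) * L) (((k : ℝ) + 1) * L) ≤ ((j : ℝ) + 1) * L := min_le_left _ _
      _ ≤ (k : ℝ) * L := this
      _ ≤ max ((j : ℝ) * L) ((k : ℝ) * L) := le_max_right _ _
    · have : ((k : ℝ) + 1) * L ≤ (j : ℝ) * L := by
        have : ((k : ℝ) + 1) ≤ (j : ℝ) := by exact_mod_cast Nat.succ_le_of_lt h
        nlinarith
      calc min (((j : ℝ) + 1) * L) (((k : ℝ) + 1) * L) ≤ ((k : ℝ) + 1) * L := min_le_right _ _
      _ ≤ (j : ℝ) * L := this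
      _ ≤ max ((j : ℝ) * L) ((k : ℝ) * L) := le_max_left _ _
  -- scaling: the key lintegral bound
  have hfinrank : (Module.finrank ℝ (ℝ × ℝ)) = 2 := by
    simp [Module.finrank_prod]
  have hmapσ : Measure.map σ (volume : Measure (ℝ × ℝ)) = ENNReal.ofReal (ε ^ 2) • volume := by
    rw [hσdef]
    rw [Measure.map_addHaar_smul (volume : Measure (ℝ × ℝ)) (inv_ne_zero hεne)]
    congr 1
    rw [hfinrank]
    rw [abs_of_nonneg (by positivity)]
    field_simp
  have key : (∫⁻ p in R, G (σ p)) ≤ ENNReal.ofReal (ε ^ 2) * ((n₀ : ℝ≥0∞) * ∫⁻ p in S0, G p) := by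
    calc (∫⁻ p in R, G (σ p)) ≤ ∫⁻ p in σ ⁻¹' T, G (σ p) := lintegral_mono_set hsub'
    _ = ∫⁻ q in T, G q ∂(Measure.map σ volume) := (setLIntegral_map hTmeas hG hσmeas).symm
    _ = ENNReal.ofReal (ε ^ 2) * ∫⁻ q in T, G q := by
        rw [hmapσ, Measure.restrict_smul, lintegral_smul_measure, smul_eq_mul]
    _ ≤ ENNReal.ofReal (ε ^ 2) * ((n₀ : ℝ≥0∞) * ∫⁻ p in S0, G p) := by
        gcongr
        calc (∫⁻ q in T, G q) ≤ ∫⁻ q in ⋃ k ∈ Finset.range n₀, st k, G q :=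
            lintegral_mono_set hcover
        _ = ∑ k ∈ Finset.range n₀, ∫⁻ q in st k, G q :=
            lintegral_biUnion_finset hdisj (fun k _ => hstmeas k) G
        _ = ∑ _k ∈ Finset.range n₀, ∫⁻ p in S0, G p := by
            exact Finset.sum_congr rfl fun k _ => hM' k
        _ = (n₀ : ℝ≥0∞) * ∫⁻ p in S0, G p := by
            rw [Finset.sum_const, Finset.card_range, nsmul_eq_mul]
  -- convert to real integrals
  have hMG : ∫⁻ p in S0, G p = ENNReal.ofReal M := by
    rw [hMdef]
    exact (ofReal_integral_eq_lintegral_ofReal hint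
      (Filter.Eventually.of_forall fun p => sq_nonneg _)).symm
  have hLHS : ∫ p in R, F (p.1 / ε, p.2 / ε) ^ 2 = (∫⁻ p in R, G (σ p)).toReal := by
    have hmeas : AEStronglyMeasurable (fun p : ℝ × ℝ => F (p.1 / ε, p.2 / ε) ^ 2)
        (volume.restrict R) := by
      apply Measurable.aestronglyMeasurable
      exact (hF.comp ((measurable_fst.div_const ε).prodMk (measurable_snd.div_const ε))).pow_const 2
    rw [integral_eq_lintegral_of_nonneg_ae
      (Filter.Eventually.of_forall fun p => sq_nonneg _) hmeas]
    congr 1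
    apply lintegral_congr
    intro p
    rw [hσcoord]
  rw [hLHS]
  have hfin : ENNReal.ofReal (ε ^ 2) * ((n₀ : ℝ≥0∞) * ENNReal.ofReal M) ≠ ⊤ := by
    finiteness
  rw [hMG] at key
  calc (∫⁻ p in R, G (σ p)).toReal
      ≤ (ENNReal.ofReal (ε ^ 2) * ((n₀ : ℝ≥0∞) * ENNReal.ofReal M)).toReal :=
        ENNReal.toReal_mono hfin key
  _ = ε ^ 2 * ((n₀ : ℝ) * M) := by
      rw [ENNReal.toReal_mul, ENNReal.toReal_mul, ENNReal.toReal_ofReal (by positivity),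
        ENNReal.toReal_ofReal hM0, ENNReal.toReal_natCast]
  _ ≤ ε * (1 / L + 1) * M := by
      have h1 : (n₀ : ℝ) ≤ (ε * L)⁻¹ + 1 := le_of_lt (Nat.ceil_lt_add_one (by positivity))
      have h2 : ε ^ 2 * (n₀ : ℝ) ≤ ε ^ 2 * ((ε * L)⁻¹ + 1) := by nlinarith
      have h3 : ε ^ 2 * ((ε * L)⁻¹ + 1) = ε / L + ε ^ 2 := by field_simp
      have h4 : ε ^ 2 ≤ ε := by nlinarith
      have h5 : ε ^ 2 * (n₀ : ℝ) ≤ ε * (1 / L + 1) := by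
        rw [h3] at h2
        have : ε * (1 / L + 1) = ε / L + ε := by ring
        linarith
      calc ε ^ 2 * ((n₀ : ℝ) * M) = (ε ^ 2 * (n₀ : ℝ)) * M := by ring
      _ ≤ (ε * (1 / L + 1)) * M := mul_le_mul_of_nonneg_right h5 hM0
end

section
/- Let L > 0 and let Φ : [0,1] × ℝ → ℝ be continuous and L-periodic in its second variable (Φ(x, s + L) = Φ(x, s) for all x, s), and let h ∈ L¹(0,1). Then ∫₀¹ h(x) Φ(x, x/ε) dx → ∫₀¹ h(x) ( (1/L) ∫₀^L Φ(x, s) ds ) dx as ε → 0⁺. -/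
open MeasureTheory Set Filter intervalIntegral


/-- Quantitative averaging for a fixed continuous periodic function. -/
lemma lemA (L : ℝ) (hL : 0 < L) (ψ : ℝ → ℝ) (hc : Continuous ψ)
    (hper : Function.Periodic ψ L) :
    ∃ C : ℝ, 0 ≤ C ∧ ∀ ε a b : ℝ, 0 < ε → a ≤ b →
      |(∫ x in a..b, ψ (x / ε)) - (b - a) * ((1 / L) * ∫ s in (0:ℝ)..L, ψ s)| ≤ C * ε := by
  set m : ℝ := (1 / L) * ∫ s in (0:ℝ)..L, ψ s with hm
  set g : ℝ → ℝ := fun s => ψ s - m with hg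
  have hgc : Continuous g := hc.sub continuous_const
  have hgper : Function.Periodic g L := fun s => by simp [hg, hper s]
  have hgint : ∀ a b : ℝ, IntervalIntegrable g volume a b :=
    fun a b => hgc.intervalIntegrable a b
  have hg0 : (∫ s in (0:ℝ)..L, g s) = 0 := by
    rw [intervalIntegral.integral_sub (hc.intervalIntegrable 0 L)
      (intervalIntegrable_const)]
    simp [hm]
    field_simp
    ring
  set F : ℝ → ℝ := fun t => ∫ s in (0:ℝ)..t, g s with hF
  have hFc : Continuous F := intervalIntegral.continuous_primitive hgint 0
  have hFper : Function.Periodic F L := by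
    intro t
    have h1 : (∫ s in (0:ℝ)..t, g s) + ∫ s in t..(t+L), g s = ∫ s in (0:ℝ)..(t+L), g s :=
      intervalIntegral.integral_add_adjacent_intervals (hgint 0 t) (hgint t (t+L))
    have h2 : (∫ s in t..(t+L), g s) = ∫ s in (0:ℝ)..(0+L), g s :=
      hgper.intervalIntegral_add_eq t 0
    simp only [zero_add] at h2
    rw [h2, hg0] at h1
    show F (t + L) = F t
    simp only [hF]
    linarith [h1]
  -- F bounded
  obtain ⟨C, hC⟩ : ∃ C : ℝ, ∀ t, |F t| ≤ C := by
    obtain ⟨C, hC⟩ := (isCompact_Icc : IsCompact (Icc (0:ℝ) L)).exists_bound_of_continuousOn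
      hFc.continuousOn
    refine ⟨C, fun t => ?_⟩
    obtain ⟨y, hy, hyt⟩ := hFper.exists_mem_Ico₀ hL t
    rw [hyt]
    exact (le_trans (le_refl _) (hC y (Ico_subset_Icc_self hy)))
  have hC0 : 0 ≤ C := le_trans (abs_nonneg _) (hC 0)
  refine ⟨2 * C, by positivity, fun ε a b hε hab => ?_⟩
  have hεne : ε ≠ 0 := ne_of_gt hε
  have key : (∫ x in a..b, ψ (x / ε)) - (b - a) * m = ε * (F (b/ε) - F (a/ε)) := by
    have h1 : (∫ x in a..b, g (x / ε)) = ε • ∫ x in a/ε..b/ε, g x :=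
      intervalIntegral.integral_comp_div (f := g) hεne
    have h2 : (∫ x in a/ε..b/ε, g x) = F (b/ε) - F (a/ε) := by
      have := intervalIntegral.integral_add_adjacent_intervals (hgint 0 (a/ε)) (hgint (a/ε) (b/ε))
      simp only [hF]; linarith [this]
    have h3 : (∫ x in a..b, g (x / ε)) = (∫ x in a..b, ψ (x / ε)) - (b - a) * m := by
      have hint : IntervalIntegrable (fun x : ℝ => ψ (x / ε)) volume a b :=
        (hc.comp (continuous_id.div_const ε)).intervalIntegrable a b
      simp only [hg]
      rw [intervalIntegral.integral_sub hint intervalIntegrable_const]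
      rw [intervalIntegral.integral_const, smul_eq_mul]
    rw [← h3, h1, h2, smul_eq_mul]
  rw [key, abs_mul, abs_of_pos hε]
  have : |F (b/ε) - F (a/ε)| ≤ 2 * C := by
    calc |F (b/ε) - F (a/ε)| ≤ |F (b/ε)| + |F (a/ε)| := abs_sub _ _
      _ ≤ C + C := add_le_add (hC _) (hC _)
      _ = 2 * C := by ring
  calc ε * |F (b/ε) - F (a/ε)| ≤ ε * (2*C) := by nlinarith [hε.le]
    _ = 2 * C * ε := by ring

lemma lemB (L : ℝ) (hL : 0 < L) (Ψ : ℝ × ℝ → ℝ) (hc : Continuous Ψ)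
    (hper : ∀ x s : ℝ, Ψ (x, s + L) = Ψ (x, s)) :
    Tendsto (fun ε : ℝ => ∫ x in (0:ℝ)..1, Ψ (x, x / ε)) (nhdsWithin 0 (Ioi 0))
      (nhds (∫ x in (0:ℝ)..1, (1 / L) * ∫ s in (0:ℝ)..L, Ψ (x, s))) := by
  set m : ℝ → ℝ := fun x => (1 / L) * ∫ s in (0:ℝ)..L, Ψ (x, s) with hm
  have hmc : Continuous m := by
    apply continuous_const.mul
    exact intervalIntegral.continuous_parametric_intervalIntegral_of_continuous'
      (f := fun x s => Ψ (x, s)) (μ := volume) hc 0 L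
  -- uniform continuity in the first variable, uniformly in the second
  have unif : ∀ δ : ℝ, 0 < δ → ∃ r : ℝ, 0 < r ∧ ∀ x y : ℝ, x ∈ Icc (0:ℝ) 1 →
      y ∈ Icc (0:ℝ) 1 → |x - y| < r → ∀ s : ℝ, |Ψ (x, s) - Ψ (y, s)| ≤ δ := by
    intro δ hδ
    have hK : IsCompact ((Icc (0:ℝ) 1) ×ˢ (Icc (0:ℝ) L)) :=
      isCompact_Icc.prod isCompact_Icc
    have huc : UniformContinuousOn Ψ ((Icc (0:ℝ) 1) ×ˢ (Icc (0:ℝ) L)) :=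
      hK.uniformContinuousOn_of_continuous hc.continuousOn
    obtain ⟨r, hr, hrr⟩ := Metric.uniformContinuousOn_iff.mp huc δ hδ
    refine ⟨r, hr, fun x y hx hy hxy s => ?_⟩
    -- reduce s to [0, L)
    have hper2 : Function.Periodic (fun s => (Ψ (x, s), Ψ (y, s))) L := by
      intro t; simp [hper]
    obtain ⟨s', hs', hss⟩ := hper2.exists_mem_Ico₀ hL s
    have h1 : Ψ (x, s) = Ψ (x, s') := congrArg Prod.fst hss
    have h2 : Ψ (y, s) = Ψ (y, s') := congrArg Prod.snd hss
    rw [h1, h2]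
    have hd : dist ((x, s') : ℝ × ℝ) ((y, s') : ℝ × ℝ) < r := by
      rw [Prod.dist_eq]
      simp only [Real.dist_eq]
      calc max |x - y| |s' - s'| = |x - y| := by simp
        _ < r := hxy
    have := hrr (x, s') (by exact ⟨hx, Ico_subset_Icc_self hs'⟩)
      (y, s') (by exact ⟨hy, Ico_subset_Icc_self hs'⟩) hd
    rw [Real.dist_eq] at this
    exact this.le
  rw [Metric.tendsto_nhds]
  intro δ hδ
  set δ4 : ℝ := δ / 4 with hδ4
  have hδ4pos : 0 < δ4 := by positivity
  obtain ⟨r, hr, hrr⟩ := unif δ4 hδ4pos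
  obtain ⟨N, hN⟩ := exists_nat_gt (1 / r)
  have hNpos : 0 < (N:ℝ) := lt_trans (by positivity) hN
  have hN0 : (N:ℝ) ≠ 0 := ne_of_gt hNpos
  have hinvN : (1:ℝ) / N < r := by
    rw [div_lt_iff₀ hNpos]
    rw [div_lt_iff₀ hr] at hN
    linarith
  -- constants from lemA for each frozen point
  have hA : ∀ i : ℕ, ∃ C : ℝ, 0 ≤ C ∧ ∀ ε a b : ℝ, 0 < ε → a ≤ b →
      |(∫ x in a..b, Ψ ((i:ℝ)/N, x / ε)) - (b - a) * ((1 / L) * ∫ s in (0:ℝ)..L, Ψ ((i:ℝ)/N, s))| ≤ C * ε := by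
    intro i
    exact lemA L hL (fun s => Ψ ((i:ℝ)/N, s))
      (hc.comp (Continuous.prodMk_right _)) (fun s => hper _ s)
  choose C hC0 hCb using hA
  set S : ℝ := ∑ i ∈ Finset.range N, C i with hS
  have hS0 : 0 ≤ S := Finset.sum_nonneg fun i _ => hC0 i
  filter_upwards [Ioo_mem_nhdsGT_of_mem (by constructor <;> [exact le_refl 0; positivity] :
      (0:ℝ) ∈ Ico 0 (δ4 / (S + 1)))] with ε hε
  obtain ⟨hε0, hεS⟩ := hε
  -- pieces
  set a : ℕ → ℝ := fun i => (i:ℝ) / N with ha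
  have hale : ∀ i : ℕ, a i ≤ a (i + 1) := by
    intro i
    apply div_le_div_of_nonneg_right (by push_cast; linarith) hNpos.le
  have haIcc : ∀ i : ℕ, i ≤ N → a i ∈ Icc (0:ℝ) 1 := by
    intro i hi
    constructor
    · positivity
    · rw [div_le_one hNpos]; exact_mod_cast hi
  have hlen : ∀ i : ℕ, a (i+1) - a i = 1 / N := by
    intro i
    simp only [ha]
    push_cast
    field_simp
    ring
  have hcomp : ∀ c : ℝ, Continuous fun x : ℝ => Ψ (x, x / c) := by
    intro c
    exact hc.comp (continuous_id.prodMk (continuous_id.div_const c))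
  have hfroz : ∀ i : ℕ, Continuous fun x : ℝ => Ψ (a i, x / ε) := by
    intro i
    exact (hc.comp (Continuous.prodMk_right _)).comp (continuous_id.div_const ε)
  -- per-piece bounds
  have key : ∀ i ∈ Finset.range N,
      |(∫ x in a i..a (i+1), Ψ (x, x / ε)) - ∫ x in a i..a (i+1), m x|
        ≤ δ4 * (1 / N) + C i * ε + δ4 * (1 / N) := by
    intro i hi
    rw [Finset.mem_range] at hi
    have hiIcc : a i ∈ Icc (0:ℝ) 1 := haIcc i hi.le
    have hmem : ∀ x ∈ uIoc (a i) (a (i+1)), x ∈ Icc (0:ℝ) 1 ∧ |x - a i| < r := by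
      intro x hx
      rw [uIoc_of_le (hale i)] at hx
      obtain ⟨hx1, hx2⟩ := hx
      have hx0 : (0:ℝ) ≤ x := le_trans hiIcc.1 hx1.le
      have hxu : x ≤ 1 := le_trans hx2 (haIcc (i+1) hi).2
      refine ⟨⟨hx0, hxu⟩, ?_⟩
      have h1 : x - a i ≤ 1 / N := by
        have := hlen i; linarith
      rw [abs_of_pos (by linarith [hx1] : (0:ℝ) < x - a i)]
      linarith
    have h1 : |(∫ x in a i..a (i+1), Ψ (x, x / ε)) - ∫ x in a i..a (i+1), Ψ (a i, x / ε)|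
        ≤ δ4 * (1 / N) := by
      rw [← intervalIntegral.integral_sub ((hcomp ε).intervalIntegrable _ _)
        ((hfroz i).intervalIntegrable _ _)]
      have hb := intervalIntegral.norm_integral_le_of_norm_le_const (C := δ4) (a := a i)
        (b := a (i+1)) (f := fun x => Ψ (x, x / ε) - Ψ (a i, x / ε)) ?_
      · rw [Real.norm_eq_abs] at hb
        calc |∫ x in a i..a (i+1), (Ψ (x, x / ε) - Ψ (a i, x / ε))|
            ≤ δ4 * |a (i+1) - a i| := hb
          _ = δ4 * (1 / N) := by rw [hlen i, abs_of_pos (by positivity)]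
      · intro x hx
        obtain ⟨hxI, hxr⟩ := hmem x hx
        rw [Real.norm_eq_abs]
        exact hrr x (a i) hxI hiIcc hxr (x / ε)
    have h2 : |(∫ x in a i..a (i+1), Ψ (a i, x / ε)) - (a (i+1) - a i) * m (a i)|
        ≤ C i * ε := by
      have := hCb i ε (a i) (a (i+1)) hε0 (hale i)
      simpa [hm, ha] using this
    have h3 : |(a (i+1) - a i) * m (a i) - ∫ x in a i..a (i+1), m x| ≤ δ4 * (1 / N) := by
      have hconst : (a (i+1) - a i) * m (a i) = ∫ x in a i..a (i+1), (fun _ : ℝ => m (a i)) x := by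
        rw [intervalIntegral.integral_const, smul_eq_mul]
      rw [hconst, ← intervalIntegral.integral_sub intervalIntegrable_const
        (hmc.intervalIntegrable _ _)]
      have hb := intervalIntegral.norm_integral_le_of_norm_le_const (C := δ4) (a := a i)
        (b := a (i+1)) (f := fun x => m (a i) - m x) ?_
      · rw [Real.norm_eq_abs] at hb
        calc |∫ x in a i..a (i+1), (m (a i) - m x)| ≤ δ4 * |a (i+1) - a i| := hb
          _ = δ4 * (1 / N) := by rw [hlen i, abs_of_pos (by positivity)]
      · intro x hx
        obtain ⟨hxI, hxr⟩ := hmem x hx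
        rw [Real.norm_eq_abs]
        have int1 : IntervalIntegrable (fun s : ℝ => Ψ (a i, s)) volume 0 L :=
          Continuous.intervalIntegrable (by fun_prop) _ _
        have int2 : IntervalIntegrable (fun s : ℝ => Ψ (x, s)) volume 0 L :=
          Continuous.intervalIntegrable (by fun_prop) _ _
        have hdiff : m (a i) - m x = (1 / L) * ∫ s in (0:ℝ)..L, (Ψ (a i, s) - Ψ (x, s)) := by
          simp only [hm]
          rw [intervalIntegral.integral_sub int1 int2]
          ring
        show |m (a i) - m x| ≤ δ4
        rw [hdiff, abs_mul, abs_of_pos (by positivity : (0:ℝ) < 1 / L)]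
        have hin := intervalIntegral.norm_integral_le_of_norm_le_const (C := δ4) (a := (0:ℝ))
          (b := L) (f := fun s => Ψ (a i, s) - Ψ (x, s)) ?_
        · rw [Real.norm_eq_abs] at hin
          calc (1 / L) * |∫ s in (0:ℝ)..L, (Ψ (a i, s) - Ψ (x, s))|
              ≤ (1 / L) * (δ4 * |L - 0|) := by
                apply mul_le_mul_of_nonneg_left hin (by positivity)
            _ = δ4 := by rw [sub_zero, abs_of_pos hL]; field_simp
        · intro s _
          rw [Real.norm_eq_abs]
          have : |a i - x| < r := by rw [abs_sub_comm]; exact hxr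
          exact hrr (a i) x hiIcc hxI this s
    calc |(∫ x in a i..a (i+1), Ψ (x, x / ε)) - ∫ x in a i..a (i+1), m x|
        ≤ |(∫ x in a i..a (i+1), Ψ (x, x / ε)) - ∫ x in a i..a (i+1), Ψ (a i, x / ε)|
          + |(∫ x in a i..a (i+1), Ψ (a i, x / ε)) - (a (i+1) - a i) * m (a i)|
          + |(a (i+1) - a i) * m (a i) - ∫ x in a i..a (i+1), m x| := by
            have := abs_sub_le ((∫ x in a i..a (i+1), Ψ (x, x / ε)))
              ((a (i+1) - a i) * m (a i)) (∫ x in a i..a (i+1), m x)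
            have := abs_sub_le ((∫ x in a i..a (i+1), Ψ (x, x / ε)))
              (∫ x in a i..a (i+1), Ψ (a i, x / ε)) ((a (i+1) - a i) * m (a i))
            linarith [abs_sub_le ((∫ x in a i..a (i+1), Ψ (x, x / ε)))
              ((a (i+1) - a i) * m (a i)) (∫ x in a i..a (i+1), m x),
              abs_sub_le ((∫ x in a i..a (i+1), Ψ (x, x / ε)))
              (∫ x in a i..a (i+1), Ψ (a i, x / ε)) ((a (i+1) - a i) * m (a i))]
      _ ≤ δ4 * (1 / N) + C i * ε + δ4 * (1 / N) := by
          exact add_le_add (add_le_add h1 h2) h3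
  -- assemble
  have ha0 : a 0 = 0 := by simp [ha]
  have haN : a N = 1 := by simp [ha, hN0]
  have sumΨ : ∑ i ∈ Finset.range N, (∫ x in a i..a (i+1), Ψ (x, x / ε))
      = ∫ x in (0:ℝ)..1, Ψ (x, x / ε) := by
    have := intervalIntegral.sum_integral_adjacent_intervals (μ := volume) (a := a) (n := N)
      (f := fun x => Ψ (x, x / ε)) (fun k _ => (hcomp ε).intervalIntegrable _ _)
    rwa [ha0, haN] at this
  have summ : ∑ i ∈ Finset.range N, (∫ x in a i..a (i+1), m x) = ∫ x in (0:ℝ)..1, m x := by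
    have := intervalIntegral.sum_integral_adjacent_intervals (μ := volume) (a := a) (n := N)
      (f := m) (fun k _ => hmc.intervalIntegrable _ _)
    rwa [ha0, haN] at this
  rw [Real.dist_eq]
  have hsplit : (∫ x in (0:ℝ)..1, Ψ (x, x / ε)) - (∫ x in (0:ℝ)..1, m x)
      = ∑ i ∈ Finset.range N, ((∫ x in a i..a (i+1), Ψ (x, x / ε)) - ∫ x in a i..a (i+1), m x) := by
    rw [Finset.sum_sub_distrib, sumΨ, summ]
  calc |(∫ x in (0:ℝ)..1, Ψ (x, x / ε)) - ∫ x in (0:ℝ)..1, m x|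
      = |∑ i ∈ Finset.range N, ((∫ x in a i..a (i+1), Ψ (x, x / ε)) - ∫ x in a i..a (i+1), m x)| := by
        rw [hsplit]
    _ ≤ ∑ i ∈ Finset.range N, |(∫ x in a i..a (i+1), Ψ (x, x / ε)) - ∫ x in a i..a (i+1), m x| :=
        Finset.abs_sum_le_sum_abs _ _
    _ ≤ ∑ i ∈ Finset.range N, (δ4 * (1 / N) + C i * ε + δ4 * (1 / N)) := Finset.sum_le_sum key
    _ = 2 * δ4 + S * ε := by
        rw [Finset.sum_add_distrib, Finset.sum_add_distrib, Finset.sum_const,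
          ← Finset.sum_mul, Finset.card_range, nsmul_eq_mul]
        field_simp
        ring
    _ < δ := by
        have h1 : ε * (S + 1) < δ4 := (lt_div_iff₀ (by positivity)).mp hεS
        nlinarith [hS0, hε0]

/-- Locally periodic averaging: if `Φ : [0,1] × ℝ → ℝ` is continuous and
`L`-periodic in its second variable and `h ∈ L¹(0,1)`, then
`∫₀¹ h(x) Φ(x, x/ε) dx → ∫₀¹ h(x) ((1/L) ∫₀^L Φ(x,s) ds) dx` as `ε → 0⁺`. -/
theorem stmt_10 (L : ℝ) (hL : 0 < L) (Φ : ℝ × ℝ → ℝ)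
    (hΦc : ContinuousOn Φ (Icc 0 1 ×ˢ (univ : Set ℝ)))
    (hΦper : ∀ x s : ℝ, Φ (x, s + L) = Φ (x, s))
    (h : ℝ → ℝ) (hh : IntegrableOn h (Ioo 0 1)) :
    Tendsto (fun ε : ℝ => ∫ x in Ioo (0 : ℝ) 1, h x * Φ (x, x / ε))
      (nhdsWithin 0 (Ioi 0))
      (nhds (∫ x in Ioo (0 : ℝ) 1, h x * ((1 / L) * ∫ s in Ioo (0 : ℝ) L, Φ (x, s)))) := by
  -- extend `Φ` to a globally continuous function by clamping the first variable
  set Φt : ℝ × ℝ → ℝ := fun p => Φ ((projIcc (0:ℝ) 1 zero_le_one p.1 : ℝ), p.2) with hΦt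
  have hproj : Continuous fun p : ℝ × ℝ => (((projIcc (0:ℝ) 1 zero_le_one p.1 : ℝ)), p.2) :=
    ((continuous_subtype_val.comp (continuous_projIcc.comp continuous_fst))).prodMk
      continuous_snd
  have hΦtc : Continuous Φt := by
    apply hΦc.comp_continuous hproj
    intro p
    exact ⟨(projIcc (0:ℝ) 1 zero_le_one p.1).2, mem_univ _⟩
  have agree : ∀ x ∈ Icc (0:ℝ) 1, ∀ s : ℝ, Φt (x, s) = Φ (x, s) := by
    intro x hx s
    simp only [hΦt, projIcc_of_mem zero_le_one hx]
  have hΦtper : ∀ x s : ℝ, Φt (x, s + L) = Φt (x, s) := fun x s => hΦper _ s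
  -- global bound
  obtain ⟨M, hM⟩ := (isCompact_Icc.prod isCompact_Icc :
      IsCompact ((Icc (0:ℝ) 1) ×ˢ (Icc (0:ℝ) L))).exists_bound_of_continuousOn
      hΦtc.continuousOn
  have hMall : ∀ x s : ℝ, |Φt (x, s)| ≤ M := by
    intro x s
    set x' : ℝ := (projIcc (0:ℝ) 1 zero_le_one x : ℝ) with hx'
    have hx'mem : x' ∈ Icc (0:ℝ) 1 := (projIcc (0:ℝ) 1 zero_le_one x).2
    have e1 : Φt (x, s) = Φt (x', s) := by
      simp only [hΦt]
      congr 1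
      simp [hx', projIcc_of_mem zero_le_one hx'mem]
    have hper2 : Function.Periodic (fun s => Φt (x', s)) L := fun t => hΦtper x' t
    obtain ⟨s', hs', hss⟩ := hper2.exists_mem_Ico₀ hL s
    rw [e1, hss]
    have := hM (x', s') ⟨hx'mem, Ico_subset_Icc_self hs'⟩
    rwa [Real.norm_eq_abs] at this
  have hM0 : 0 ≤ M := le_trans (abs_nonneg _) (hMall 0 0)
  -- the fiberwise mean of the extended function
  set mt : ℝ → ℝ := fun x => (1 / L) * ∫ s in (0:ℝ)..L, Φt (x, s) with hmt
  have hmtc : Continuous mt := by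
    apply continuous_const.mul
    exact intervalIntegral.continuous_parametric_intervalIntegral_of_continuous'
      (f := fun x s => Φt (x, s)) (μ := volume) hΦtc 0 L
  have hmtbd : ∀ x : ℝ, |mt x| ≤ M := by
    intro x
    have hin := intervalIntegral.norm_integral_le_of_norm_le_const (C := M) (a := (0:ℝ))
      (b := L) (f := fun s => Φt (x, s)) (fun s _ => by rw [Real.norm_eq_abs]; exact hMall x s)
    rw [Real.norm_eq_abs] at hin
    rw [hmt, abs_mul, abs_of_pos (by positivity : (0:ℝ) < 1 / L)]
    calc (1 / L) * |∫ s in (0:ℝ)..L, Φt (x, s)| ≤ (1 / L) * (M * |L - 0|) :=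
        mul_le_mul_of_nonneg_left hin (by positivity)
      _ = M := by rw [sub_zero, abs_of_pos hL]; field_simp
  -- rewrite the goal in terms of `Φt` and `mt`
  have eqfun : ∀ ε : ℝ, (∫ x in Ioo (0:ℝ) 1, h x * Φ (x, x / ε))
      = ∫ x in Ioo (0:ℝ) 1, h x * Φt (x, x / ε) := by
    intro ε
    apply setIntegral_congr_fun measurableSet_Ioo
    intro x hx
    show h x * Φ (x, x / ε) = h x * Φt (x, x / ε)
    rw [agree x (Ioo_subset_Icc_self hx) (x / ε)]
  have eqlim : (∫ x in Ioo (0:ℝ) 1, h x * ((1 / L) * ∫ s in Ioo (0:ℝ) L, Φ (x, s)))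
      = ∫ x in Ioo (0:ℝ) 1, h x * mt x := by
    apply setIntegral_congr_fun measurableSet_Ioo
    intro x hx
    have e1 : (∫ s in Ioo (0:ℝ) L, Φ (x, s)) = ∫ s in Ioo (0:ℝ) L, Φt (x, s) :=
      setIntegral_congr_fun measurableSet_Ioo fun s _ =>
        (agree x (Ioo_subset_Icc_self hx) s).symm
    have e2 : mt x = (1 / L) * ∫ s in Ioo (0:ℝ) L, Φt (x, s) := by
      show (1 / L) * (∫ s in (0:ℝ)..L, Φt (x, s)) = (1 / L) * ∫ s in Ioo (0:ℝ) L, Φt (x, s)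
      rw [intervalIntegral.integral_of_le hL.le, integral_Ioc_eq_integral_Ioo]
    show h x * ((1 / L) * ∫ s in Ioo (0:ℝ) L, Φ (x, s)) = h x * mt x
    rw [e1, e2]
  rw [eqlim]
  have main : Tendsto (fun ε : ℝ => ∫ x in Ioo (0:ℝ) 1, h x * Φt (x, x / ε))
      (nhdsWithin 0 (Ioi 0)) (nhds (∫ x in Ioo (0:ℝ) 1, h x * mt x)) := by
    rw [Metric.tendsto_nhds]
    intro δ hδ
    set δ' : ℝ := δ / (4 * (M + 1)) with hδ'
    have hδ'pos : 0 < δ' := by positivity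
    have hInd : Integrable ((Ioo (0:ℝ) 1).indicator h) volume :=
      hh.integrable_indicator measurableSet_Ioo
    obtain ⟨g, gsupp, gL1, gcont, gint⟩ := hInd.exists_hasCompactSupport_integral_sub_le hδ'pos
    have hg1 : (∫ x in Ioo (0:ℝ) 1, ‖h x - g x‖) ≤ δ' := by
      have e : (∫ x in Ioo (0:ℝ) 1, ‖h x - g x‖)
          = ∫ x in Ioo (0:ℝ) 1, ‖(Ioo (0:ℝ) 1).indicator h x - g x‖ :=
        (setIntegral_congr_fun measurableSet_Ioo fun x hx => by
          rw [indicator_of_mem hx]).symm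
      rw [e]
      refine le_trans (setIntegral_le_integral (hInd.sub gint).norm ?_) gL1
      exact Eventually.of_forall fun x => norm_nonneg _
    have int_g : IntegrableOn g (Ioo (0:ℝ) 1) volume := gint.integrableOn
    have contΦε : ∀ c : ℝ, Continuous fun x : ℝ => Φt (x, x / c) := fun c =>
      hΦtc.comp (continuous_id.prodMk (continuous_id.div_const c))
    have int_hΦ : ∀ c : ℝ, IntegrableOn (fun x => h x * Φt (x, x / c)) (Ioo 0 1) volume := by
      intro c
      have := Integrable.bdd_mul hh (contΦε c).aestronglyMeasurable
        (c := M) (Eventually.of_forall fun x => by rw [Real.norm_eq_abs]; exact hMall _ _)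
      exact this.congr (Eventually.of_forall fun x => mul_comm _ _)
    have int_hm : IntegrableOn (fun x => h x * mt x) (Ioo 0 1) volume := by
      have := Integrable.bdd_mul hh hmtc.aestronglyMeasurable
        (c := M) (Eventually.of_forall fun x => by rw [Real.norm_eq_abs]; exact hmtbd _)
      exact this.congr (Eventually.of_forall fun x => mul_comm _ _)
    have int_gΦ : ∀ c : ℝ, IntegrableOn (fun x => g x * Φt (x, x / c)) (Ioo 0 1) volume := by
      intro c
      exact (intervalIntegrable_iff_integrableOn_Ioo_of_le zero_le_one).mp
        ((gcont.mul (contΦε c)).intervalIntegrable 0 1)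
    have int_gm : IntegrableOn (fun x => g x * mt x) (Ioo 0 1) volume :=
      (intervalIntegrable_iff_integrableOn_Ioo_of_le zero_le_one).mp
        ((gcont.mul hmtc).intervalIntegrable 0 1)
    have est : ∀ φ : ℝ → ℝ, (∀ x, |φ x| ≤ M) →
        IntegrableOn (fun x => h x * φ x) (Ioo 0 1) volume →
        IntegrableOn (fun x => g x * φ x) (Ioo 0 1) volume →
        |(∫ x in Ioo (0:ℝ) 1, h x * φ x) - ∫ x in Ioo (0:ℝ) 1, g x * φ x| ≤ δ' * M := by
      intro φ hφbd ih ig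
      rw [← integral_sub ih ig]
      calc |∫ x in Ioo (0:ℝ) 1, (h x * φ x - g x * φ x)|
          ≤ ∫ x in Ioo (0:ℝ) 1, ‖h x * φ x - g x * φ x‖ := by
            have := MeasureTheory.norm_integral_le_integral_norm (μ := volume.restrict (Ioo (0:ℝ) 1)) (fun x => h x * φ x - g x * φ x)
            simpa [Real.norm_eq_abs] using this
        _ ≤ ∫ x in Ioo (0:ℝ) 1, ‖h x - g x‖ * M := by
            apply integral_mono (ih.sub ig).norm ((hh.sub int_g).norm.mul_const M)
            intro x
            show ‖h x * φ x - g x * φ x‖ ≤ ‖h x - g x‖ * M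
            have e : h x * φ x - g x * φ x = (h x - g x) * φ x := by ring
            rw [e, norm_mul]
            exact mul_le_mul_of_nonneg_left
              (le_trans (le_of_eq (Real.norm_eq_abs _)) (hφbd x)) (norm_nonneg _)
        _ = (∫ x in Ioo (0:ℝ) 1, ‖h x - g x‖) * M := integral_mul_const _ _
        _ ≤ δ' * M := mul_le_mul_of_nonneg_right hg1 hM0
    -- apply lemB to `g x * Φt (x, s)`
    have Ψc : Continuous fun p : ℝ × ℝ => g p.1 * Φt p :=
      (gcont.comp continuous_fst).mul hΦtc
    have T := lemB L hL (fun p => g p.1 * Φt p) Ψc (fun x s => by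
      show g x * Φt (x, s + L) = g x * Φt (x, s)
      rw [hΦtper])
    have T' : Tendsto (fun ε : ℝ => ∫ x in Ioo (0:ℝ) 1, g x * Φt (x, x / ε))
        (nhdsWithin 0 (Ioi 0)) (nhds (∫ x in Ioo (0:ℝ) 1, g x * mt x)) := by
      have e1 : ∀ ε : ℝ, (∫ x in (0:ℝ)..1, g x * Φt (x, x / ε))
          = ∫ x in Ioo (0:ℝ) 1, g x * Φt (x, x / ε) := fun ε => by
        rw [intervalIntegral.integral_of_le zero_le_one, integral_Ioc_eq_integral_Ioo]
      have e2 : (∫ x in (0:ℝ)..1, (1 / L) * ∫ s in (0:ℝ)..L, g x * Φt (x, s))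
          = ∫ x in Ioo (0:ℝ) 1, g x * mt x := by
        rw [intervalIntegral.integral_of_le zero_le_one, integral_Ioc_eq_integral_Ioo]
        apply setIntegral_congr_fun measurableSet_Ioo
        intro x _
        show (1 / L) * (∫ s in (0:ℝ)..L, g x * Φt (x, s)) = g x * mt x
        rw [intervalIntegral.integral_const_mul]
        show (1 / L) * (g x * ∫ s in (0:ℝ)..L, Φt (x, s))
          = g x * ((1 / L) * ∫ s in (0:ℝ)..L, Φt (x, s))
        ring
      rw [← e2]
      exact T.congr e1
    have TE := (Metric.tendsto_nhds.mp T') (δ / 4) (by positivity)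
    filter_upwards [TE] with ε hTε
    rw [Real.dist_eq] at hTε ⊢
    have E1 := est (fun x => Φt (x, x / ε)) (fun x => hMall x (x / ε)) (int_hΦ ε) (int_gΦ ε)
    have E3 := est mt hmtbd int_hm int_gm
    have hkey : δ' * (M + 1) = δ / 4 := by
      rw [hδ']
      field_simp
    have hδ'M : δ' * M ≤ δ / 4 := by nlinarith [hδ'pos.le]
    set A := ∫ x in Ioo (0:ℝ) 1, h x * Φt (x, x / ε)
    set B := ∫ x in Ioo (0:ℝ) 1, g x * Φt (x, x / ε)
    set Cq := ∫ x in Ioo (0:ℝ) 1, g x * mt x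
    set D := ∫ x in Ioo (0:ℝ) 1, h x * mt x
    have t1 : |A - D| ≤ |A - B| + |B - D| := abs_sub_le A B D
    have t2 : |B - D| ≤ |B - Cq| + |Cq - D| := abs_sub_le B Cq D
    have t3 : |Cq - D| = |D - Cq| := abs_sub_comm _ _
    linarith
  exact main.congr fun ε => (eqfun ε).symm
end

section
/- Let Ξ : [0,1] × ℝ × ℝ → ℝ be continuous, bounded, and L-periodic in its second variable (Ξ(x, y + L, z) = Ξ(x, y, z)). Then ε^{−1} ∫_{R^ε} Ξ(x₁, x₁/ε, x₂/ε) dx₁ dx₂ → (1/L) ∫₀¹ ∫₀^L ∫_{−b(x)}^{G(x,y)} Ξ(x, y, z) dz dy dx as ε → 0⁺. -/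
open MeasureTheory Set Filter
open scoped ENNReal
set_option maxHeartbeats 1600000

def thinDomain (b : ℝ → ℝ) (G : ℝ × ℝ → ℝ) (ε : ℝ) : Set (ℝ × ℝ) :=
  {p : ℝ × ℝ | p.1 ∈ Ioo 0 1 ∧ p.2 ∈ Ioo (-(ε * b p.1)) (ε * G (p.1, p.1 / ε))}

theorem osc_avg (L M : ℝ) (hL : 0 < L) (hM0 : 0 ≤ M)
    (H : ℝ → ℝ → ℝ) (Hcont : Continuous fun p : ℝ × ℝ => H p.1 p.2)
    (Hper : ∀ x, Function.Periodic (H x) L) (Hbd : ∀ x t, |H x t| ≤ M) :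
    Tendsto (fun ε : ℝ => ∫ x in Ioo (0:ℝ) 1, H x (x / ε)) (nhdsWithin 0 (Ioi 0))
      (nhds ((1 / L) * ∫ x in Ioo (0:ℝ) 1, ∫ y in Ioo (0:ℝ) L, H x y)) := by
  haveI hfin1 : IsFiniteMeasure (volume.restrict (Ioo (0:ℝ) 1)) :=
    ⟨by rw [Measure.restrict_apply_univ]; exact measure_Ioo_lt_top⟩
  -- B1 : cell average identity
  have B1 : ∀ ε : ℝ, 0 < ε → ∀ x : ℝ,
      (1 / L) * (∫ y in Ioo (0:ℝ) L, H x y) =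
        (ε * L)⁻¹ * ∫ s in Ioo (0:ℝ) (ε * L), H x ((x + s) / ε) := by
    intro ε hε x
    have hεne : ε ≠ 0 := hε.ne'
    have hεL : 0 < ε * L := mul_pos hε hL
    have e1 : (∫ s in Ioo (0:ℝ) (ε * L), H x ((x + s) / ε)) =
        ∫ s in (0:ℝ)..(ε * L), H x ((x + s) / ε) := by
      rw [intervalIntegral.integral_of_le hεL.le, integral_Ioc_eq_integral_Ioo]
    have e2 : (∫ s in (0:ℝ)..(ε * L), H x ((x + s) / ε)) =
        ∫ s in (0:ℝ)..(ε * L), H x ((s + x) / ε) := by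
      congr 1; funext s; rw [add_comm]
    have e3 : (∫ s in (0:ℝ)..(ε * L), H x ((s + x) / ε)) =
        ∫ u in (0 + x)..(ε * L + x), H x (u / ε) :=
      intervalIntegral.integral_comp_add_right (fun u => H x (u / ε)) x
    have e4 : (∫ u in (0 + x)..(ε * L + x), H x (u / ε)) =
        ε • ∫ u in ((0 + x) / ε)..((ε * L + x) / ε), H x u :=
      intervalIntegral.integral_comp_div _ hεne
    have e5 : (ε * L + x) / ε = x / ε + L := by field_simp; ring
    have e6 : (0 + x) / ε = x / ε := by rw [zero_add]
    have e7 : (∫ u in (x / ε)..(x / ε + L), H x u) = ∫ u in (0:ℝ)..(0 + L), H x u :=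
      (Hper x).intervalIntegral_add_eq (x / ε) 0
    have e8 : (∫ u in (0:ℝ)..(0 + L), H x u) = ∫ y in Ioo (0:ℝ) L, H x y := by
      rw [zero_add, intervalIntegral.integral_of_le hL.le, integral_Ioc_eq_integral_Ioo]
    rw [e1, e2, e3, e4, e5, e6, e7, e8, smul_eq_mul]
    rw [mul_inv, mul_comm ε⁻¹ L⁻¹, mul_assoc, ← mul_assoc ε⁻¹ ε, inv_mul_cancel₀ hεne,
      one_mul, one_div]
  -- B3 : uniform continuity modulus in the first variable
  have huc : ∀ δ : ℝ, 0 < δ → ∃ η > 0, ∀ u ∈ Icc (0:ℝ) 1, ∀ v ∈ Icc (0:ℝ) 1, ∀ t : ℝ,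
      |u - v| ≤ η → |H u t - H v t| ≤ δ := by
    intro δ hδ
    have hK : IsCompact (Icc (0:ℝ) 1 ×ˢ Icc (0:ℝ) L) := isCompact_Icc.prod isCompact_Icc
    have huco := hK.uniformContinuousOn_of_continuous Hcont.continuousOn
    rw [Metric.uniformContinuousOn_iff_le] at huco
    obtain ⟨η, hη0, hmod⟩ := huco δ hδ
    refine ⟨η, hη0, fun u hu v hv t ht => ?_⟩
    set t₀ : ℝ := t - ⌊t / L⌋ * L with ht₀def
    have ht₀ : t₀ ∈ Icc (0:ℝ) L :=
      ⟨Int.sub_floor_div_mul_nonneg t hL, (Int.sub_floor_div_mul_lt t hL).le⟩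
    have hp1 : H u t₀ = H u t := (Hper u).sub_int_mul_eq ⌊t / L⌋
    have hp2 : H v t₀ = H v t := (Hper v).sub_int_mul_eq ⌊t / L⌋
    have hdist : dist ((u, t₀) : ℝ × ℝ) (v, t₀) ≤ η := by
      rw [Prod.dist_eq]
      simp only [dist_self]
      rw [Real.dist_eq]
      exact max_le ht hη0.le
    have := hmod (u, t₀) ⟨hu, ht₀⟩ (v, t₀) ⟨hv, ht₀⟩ hdist
    rw [Real.dist_eq] at this
    simpa [hp1, hp2] using this
  -- B4 : shift estimate
  have B4 : ∀ ε : ℝ, 0 < ε → ∀ s : ℝ, 0 ≤ s → s ≤ 1 → ∀ δ' : ℝ, 0 ≤ δ' →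
      (∀ u ∈ Icc (0:ℝ) 1, ∀ v ∈ Icc (0:ℝ) 1, ∀ t : ℝ, |u - v| ≤ s → |H u t - H v t| ≤ δ') →
      |(∫ x in Ioo (0:ℝ) 1, H x ((x + s) / ε)) - ∫ x in Ioo (0:ℝ) 1, H x (x / ε)|
        ≤ δ' + 2 * M * s := by
    intro ε hε s hs0 hs1 δ' hδ'0 hδ'
    have hcf : Continuous fun u : ℝ => H (u - s) (u / ε) :=
      Hcont.comp ((continuous_id.sub continuous_const).prodMk (continuous_id.div_const ε))
    have hcg : Continuous fun u : ℝ => H u (u / ε) :=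
      Hcont.comp (continuous_id.prodMk (continuous_id.div_const ε))
    have hD : (∫ x in Ioo (0:ℝ) 1, H x ((x + s) / ε)) =
        ∫ u in s..(1 + s), H (u - s) (u / ε) := by
      rw [show (∫ x in Ioo (0:ℝ) 1, H x ((x + s) / ε))
          = ∫ x in (0:ℝ)..1, H x ((x + s) / ε) from by
        rw [intervalIntegral.integral_of_le zero_le_one, integral_Ioc_eq_integral_Ioo]]
      have e0 : (∫ x in (0:ℝ)..1, H x ((x + s) / ε)) =
          ∫ x in (0:ℝ)..1, H (x + s - s) ((x + s) / ε) := by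
        congr 1; funext x; rw [add_sub_cancel_right]
      have e1' : (∫ x in (0:ℝ)..1, H (x + s - s) ((x + s) / ε)) =
          ∫ u in (0 + s)..(1 + s), H (u - s) (u / ε) :=
        intervalIntegral.integral_comp_add_right (fun u => H (u - s) (u / ε)) s
      rw [e0, e1', zero_add]
    have hJ' : (∫ x in Ioo (0:ℝ) 1, H x (x / ε)) = ∫ u in (0:ℝ)..1, H u (u / ε) := by
      rw [intervalIntegral.integral_of_le zero_le_one, integral_Ioc_eq_integral_Ioo]
    have key : (∫ u in s..(1 + s), H (u - s) (u / ε)) - (∫ u in (0:ℝ)..1, H u (u / ε)) =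
        (∫ u in s..(1:ℝ), (H (u - s) (u / ε) - H u (u / ε)))
          + (∫ u in (1:ℝ)..(1 + s), H (u - s) (u / ε)) - ∫ u in (0:ℝ)..s, H u (u / ε) := by
      have i1 : (∫ u in s..(1:ℝ), H (u - s) (u / ε)) + ∫ u in (1:ℝ)..(1 + s), H (u - s) (u / ε)
          = ∫ u in s..(1 + s), H (u - s) (u / ε) :=
        intervalIntegral.integral_add_adjacent_intervals
          (hcf.intervalIntegrable _ _) (hcf.intervalIntegrable _ _)
      have i2 : (∫ u in (0:ℝ)..s, H u (u / ε)) + ∫ u in s..(1:ℝ), H u (u / ε)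
          = ∫ u in (0:ℝ)..1, H u (u / ε) :=
        intervalIntegral.integral_add_adjacent_intervals
          (hcg.intervalIntegrable _ _) (hcg.intervalIntegrable _ _)
      have i3 : (∫ u in s..(1:ℝ), (H (u - s) (u / ε) - H u (u / ε)))
          = (∫ u in s..(1:ℝ), H (u - s) (u / ε)) - ∫ u in s..(1:ℝ), H u (u / ε) :=
        intervalIntegral.integral_sub (hcf.intervalIntegrable _ _) (hcg.intervalIntegrable _ _)
      rw [← i1, ← i2, i3]; ring
    have n1 : |∫ u in s..(1:ℝ), (H (u - s) (u / ε) - H u (u / ε))| ≤ δ' * |1 - s| := by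
      have hb : ∀ u ∈ Set.uIoc s (1:ℝ), ‖H (u - s) (u / ε) - H u (u / ε)‖ ≤ δ' := by
        intro u hu
        rw [Set.uIoc_of_le hs1] at hu
        have hu1 : u - s ∈ Icc (0:ℝ) 1 := ⟨by linarith [hu.1], by linarith [hu.2]⟩
        have hu2 : u ∈ Icc (0:ℝ) 1 := ⟨by linarith [hu.1, hs0], hu.2⟩
        have habs : |(u - s) - u| ≤ s := by
          rw [show (u - s) - u = -s by ring, abs_neg, abs_of_nonneg hs0]
        simpa [Real.norm_eq_abs] using hδ' _ hu1 _ hu2 (u / ε) habs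
      simpa [Real.norm_eq_abs] using intervalIntegral.norm_integral_le_of_norm_le_const hb
    have n2 : |∫ u in (1:ℝ)..(1 + s), H (u - s) (u / ε)| ≤ M * |1 + s - 1| := by
      have hb : ∀ u ∈ Set.uIoc (1:ℝ) (1 + s), ‖H (u - s) (u / ε)‖ ≤ M :=
        fun u _ => by simpa [Real.norm_eq_abs] using Hbd (u - s) (u / ε)
      simpa [Real.norm_eq_abs] using intervalIntegral.norm_integral_le_of_norm_le_const hb
    have n3 : |∫ u in (0:ℝ)..s, H u (u / ε)| ≤ M * |s - 0| := by
      have hb : ∀ u ∈ Set.uIoc (0:ℝ) s, ‖H u (u / ε)‖ ≤ M :=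
        fun u _ => by simpa [Real.norm_eq_abs] using Hbd u (u / ε)
      simpa [Real.norm_eq_abs] using intervalIntegral.norm_integral_le_of_norm_le_const hb
    rw [hD, hJ', key]
    have habs1 : |1 - s| ≤ 1 := by rw [abs_of_nonneg (by linarith)]; linarith
    have habs2 : |1 + s - 1| = s := by rw [show (1:ℝ) + s - 1 = s by ring, abs_of_nonneg hs0]
    have habs3 : |s - 0| = s := by rw [sub_zero, abs_of_nonneg hs0]
    rw [habs2] at n2
    rw [habs3] at n3
    have tri : ∀ a b c : ℝ, |a + b - c| ≤ |a| + |b| + |c| := by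
      intro a b c
      have h1 := abs_add_le (a + b) (-c)
      have h2 := abs_add_le a b
      rw [abs_neg] at h1
      calc |a + b - c| = |a + b + -c| := by ring_nf
        _ ≤ |a + b| + |c| := h1
        _ ≤ |a| + |b| + |c| := by linarith
    refine (tri _ _ _).trans ?_
    have h1 : |∫ u in s..(1:ℝ), (H (u - s) (u / ε) - H u (u / ε))| ≤ δ' :=
      n1.trans (by nlinarith)
    linarith
  -- final assembly
  rw [Metric.tendsto_nhdsWithin_nhds]
  intro δ hδ
  obtain ⟨η, hη0, hηuc⟩ := huc (δ / 4) (by linarith)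
  refine ⟨min (η / L) (min (1 / L) (δ / (4 * (M + 1) * L))), by positivity, ?_⟩
  intro ε hεm hεd
  have hε : (0:ℝ) < ε := hεm
  rw [Real.dist_eq, sub_zero, abs_of_pos hε] at hεd
  have hεη : ε * L ≤ η := by
    have h1 : ε < η / L := lt_of_lt_of_le hεd (min_le_left _ _)
    have := (lt_div_iff₀ hL).1 h1
    linarith
  have hσ1 : ε * L ≤ 1 := by
    have h1 : ε < 1 / L := lt_of_lt_of_le hεd ((min_le_right _ _).trans (min_le_left _ _))
    have := (lt_div_iff₀ hL).1 h1
    linarith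
  have hσδ : 2 * M * (ε * L) ≤ δ / 2 := by
    have h1 : ε < δ / (4 * (M + 1) * L) :=
      lt_of_lt_of_le hεd ((min_le_right _ _).trans (min_le_right _ _))
    have h2 : ε * (4 * (M + 1) * L) < δ := (lt_div_iff₀ (by positivity)).1 h1
    nlinarith [mul_pos hε hL]
  have hσ0 : 0 < ε * L := mul_pos hε hL
  have hσne : (ε * L) ≠ 0 := hσ0.ne'
  haveI hfin2 : IsFiniteMeasure (volume.restrict (Ioo (0:ℝ) (ε * L))) :=
    ⟨by rw [Measure.restrict_apply_univ]; exact measure_Ioo_lt_top⟩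
  have hcont1 : Continuous fun p : ℝ × ℝ => H p.1 ((p.1 + p.2) / ε) :=
    Hcont.comp (continuous_fst.prodMk ((continuous_fst.add continuous_snd).div_const ε))
  have hcont2 : Continuous fun p : ℝ × ℝ => H p.2 ((p.2 + p.1) / ε) :=
    Hcont.comp (continuous_snd.prodMk ((continuous_snd.add continuous_fst).div_const ε))
  have hIint : Integrable (Function.uncurry fun x s => H x ((x + s) / ε))
      ((volume.restrict (Ioo (0:ℝ) 1)).prod (volume.restrict (Ioo (0:ℝ) (ε * L)))) := by
    refine ⟨Continuous.aestronglyMeasurable (by exact hcont1), ?_⟩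
    exact HasFiniteIntegral.of_bounded (C := M)
      (ae_of_all _ fun p => by simpa [Real.norm_eq_abs, Function.uncurry_def] using Hbd _ _)
  have hIint2 : Integrable (Function.uncurry fun s x => H x ((x + s) / ε))
      ((volume.restrict (Ioo (0:ℝ) (ε * L))).prod (volume.restrict (Ioo (0:ℝ) 1))) := by
    refine ⟨Continuous.aestronglyMeasurable (by exact hcont2), ?_⟩
    exact HasFiniteIntegral.of_bounded (C := M)
      (ae_of_all _ fun p => by simpa [Real.norm_eq_abs, Function.uncurry_def] using Hbd _ _)
  have hDint : Integrable (fun s => ∫ x in Ioo (0:ℝ) 1, H x ((x + s) / ε))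
      (volume.restrict (Ioo (0:ℝ) (ε * L))) := hIint2.integral_prod_left
  have B2 : (∫ x in Ioo (0:ℝ) 1, ∫ s in Ioo (0:ℝ) (ε * L), H x ((x + s) / ε))
      = ∫ s in Ioo (0:ℝ) (ε * L), ∫ x in Ioo (0:ℝ) 1, H x ((x + s) / ε) :=
    integral_integral_swap hIint
  have hmean : (1 / L) * (∫ x in Ioo (0:ℝ) 1, ∫ y in Ioo (0:ℝ) L, H x y)
      = (ε * L)⁻¹ * ∫ s in Ioo (0:ℝ) (ε * L), ∫ x in Ioo (0:ℝ) 1, H x ((x + s) / ε) := by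
    calc (1 / L) * (∫ x in Ioo (0:ℝ) 1, ∫ y in Ioo (0:ℝ) L, H x y)
        = ∫ x in Ioo (0:ℝ) 1, (1 / L) * ∫ y in Ioo (0:ℝ) L, H x y :=
          (integral_const_mul _ _).symm
      _ = ∫ x in Ioo (0:ℝ) 1, (ε * L)⁻¹ * ∫ s in Ioo (0:ℝ) (ε * L), H x ((x + s) / ε) :=
          setIntegral_congr_fun measurableSet_Ioo (fun x _ => B1 ε hε x)
      _ = (ε * L)⁻¹ * ∫ x in Ioo (0:ℝ) 1, ∫ s in Ioo (0:ℝ) (ε * L), H x ((x + s) / ε) :=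
          integral_const_mul _ _
      _ = (ε * L)⁻¹ * ∫ s in Ioo (0:ℝ) (ε * L), ∫ x in Ioo (0:ℝ) 1, H x ((x + s) / ε) := by
          rw [B2]
  have hJrw : (∫ x in Ioo (0:ℝ) 1, H x (x / ε))
      = (ε * L)⁻¹ * ∫ _s in Ioo (0:ℝ) (ε * L), (∫ x in Ioo (0:ℝ) 1, H x (x / ε)) := by
    rw [setIntegral_const, measureReal_def, Real.volume_Ioo, sub_zero, ENNReal.toReal_ofReal hσ0.le,
      smul_eq_mul, ← mul_assoc, inv_mul_cancel₀ hσne, one_mul]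
  rw [Real.dist_eq, hmean, hJrw, ← mul_sub,
    ← integral_sub (integrable_const _) hDint, abs_mul, abs_of_pos (inv_pos.2 hσ0)]
  have hbound : ∀ s ∈ Ioo (0:ℝ) (ε * L),
      ‖(∫ x in Ioo (0:ℝ) 1, H x (x / ε)) - ∫ x in Ioo (0:ℝ) 1, H x ((x + s) / ε)‖
        ≤ δ / 4 + 2 * M * (ε * L) := by
    intro s hs
    have hs0 : 0 ≤ s := hs.1.le
    have hs1 : s ≤ 1 := hs.2.le.trans hσ1
    have hmod : ∀ u ∈ Icc (0:ℝ) 1, ∀ v ∈ Icc (0:ℝ) 1, ∀ t : ℝ,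
        |u - v| ≤ s → |H u t - H v t| ≤ δ / 4 :=
      fun u hu v hv t ht => hηuc u hu v hv t (ht.trans (hs.2.le.trans hεη))
    have hB4 := B4 ε hε s hs0 hs1 (δ / 4) (by linarith) hmod
    rw [Real.norm_eq_abs, abs_sub_comm]
    refine hB4.trans ?_
    have h2M : 2 * M * s ≤ 2 * M * (ε * L) := by nlinarith [hs.2.le]
    linarith
  have hnorm := norm_setIntegral_le_of_norm_le_const (C := δ / 4 + 2 * M * (ε * L))
    (μ := volume) measure_Ioo_lt_top hbound
  rw [Real.norm_eq_abs, measureReal_def, Real.volume_Ioo, sub_zero, ENNReal.toReal_ofReal hσ0.le] at hnorm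
  have final : (ε * L)⁻¹ *
      |∫ s in Ioo (0:ℝ) (ε * L),
        ((∫ x in Ioo (0:ℝ) 1, H x (x / ε)) - ∫ x in Ioo (0:ℝ) 1, H x ((x + s) / ε))|
      ≤ δ / 4 + 2 * M * (ε * L) := by
    have hmul := mul_le_mul_of_nonneg_left hnorm (inv_pos.2 hσ0).le
    calc (ε * L)⁻¹ * |_| ≤ (ε * L)⁻¹ * ((δ / 4 + 2 * M * (ε * L)) * (ε * L)) := hmul
      _ = δ / 4 + 2 * M * (ε * L) := by
          rw [mul_comm (δ / 4 + 2 * M * (ε * L)) (ε * L), ← mul_assoc,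
            inv_mul_cancel₀ hσne, one_mul]
  calc (ε * L)⁻¹ *
      |∫ s in Ioo (0:ℝ) (ε * L),
        ((∫ x in Ioo (0:ℝ) 1, H x (x / ε)) - ∫ x in Ioo (0:ℝ) 1, H x ((x + s) / ε))|
      ≤ δ / 4 + 2 * M * (ε * L) := final
    _ < δ := by linarith

theorem main_avg (L b₁ G₀ G₁ C : ℝ) (hL : 0 < L) (hG₀ : 0 < G₀)
    (b : ℝ → ℝ) (hb : Continuous b) (hb0 : ∀ x, 0 ≤ b x) (hbB : ∀ x, b x ≤ b₁)
    (G : ℝ × ℝ → ℝ) (hG : Continuous G) (hGper : ∀ x y, G (x, y + L) = G (x, y))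
    (hG0 : ∀ x y, G₀ ≤ G (x, y)) (hGB : ∀ x y, G (x, y) ≤ G₁)
    (Ξ : ℝ × ℝ × ℝ → ℝ) (hΞ : Continuous Ξ) (hΞbd : ∀ q, |Ξ q| ≤ C)
    (hΞper : ∀ x y z, Ξ (x, y + L, z) = Ξ (x, y, z)) :
    Tendsto (fun ε : ℝ => ε⁻¹ * ∫ p in thinDomain b G ε, Ξ (p.1, p.1 / ε, p.2 / ε))
      (nhdsWithin 0 (Ioi 0))
      (nhds ((1 / L) * ∫ x in Ioo (0 : ℝ) 1, ∫ y in Ioo (0 : ℝ) L,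
        ∫ z in Ioo (-(b x)) (G (x, y)), Ξ (x, y, z))) := by
  -- auxiliary function
  set H : ℝ → ℝ → ℝ := fun x t => ∫ z in Ioo (-(b x)) (G (x, t)), Ξ (x, t, z) with hH
  have hC0 : 0 ≤ C := (abs_nonneg _).trans (hΞbd (0, 0, 0))
  have hb₁0 : 0 ≤ b₁ := (hb0 0).trans (hbB 0)
  have hG₁0 : 0 < G₁ := hG₀.trans_le ((hG0 0 0).trans (hGB 0 0))
  have hle : ∀ x t, -(b x) ≤ G (x, t) := fun x t =>
    (neg_nonpos.2 (hb0 x)).trans (hG₀.le.trans (hG0 x t))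
  have Hrepr : ∀ x t, H x t = ∫ z in (-(b x))..(G (x, t)), Ξ (x, t, z) := by
    intro x t
    rw [intervalIntegral.integral_of_le (hle x t), integral_Ioc_eq_integral_Ioo]
  -- continuity of H
  have hΞz : ∀ p : ℝ × ℝ, Continuous fun z : ℝ => Ξ (p.1, p.2, z) := by
    intro p; fun_prop
  have Hcont : Continuous (fun p : ℝ × ℝ => H p.1 p.2) := by
    have huc : Continuous (Function.uncurry fun (p : ℝ × ℝ) (z : ℝ) => Ξ (p.1, p.2, z)) := by
      exact hΞ.comp ((continuous_fst.fst).prodMk ((continuous_fst.snd).prodMk continuous_snd))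
    have c1 : Continuous fun p : ℝ × ℝ => ∫ z in (0:ℝ)..(G p), Ξ (p.1, p.2, z) := by
      exact intervalIntegral.continuous_parametric_intervalIntegral_of_continuous
        (f := fun (p : ℝ × ℝ) (z : ℝ) => Ξ (p.1, p.2, z)) (μ := volume) (a₀ := 0) huc hG
    have c2 : Continuous fun p : ℝ × ℝ => ∫ z in (0:ℝ)..(-(b p.1)), Ξ (p.1, p.2, z) := by
      exact intervalIntegral.continuous_parametric_intervalIntegral_of_continuous
        (f := fun (p : ℝ × ℝ) (z : ℝ) => Ξ (p.1, p.2, z)) (μ := volume) (a₀ := 0) huc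
        (hb.comp continuous_fst).neg
    refine (c1.sub c2).congr fun p => ?_
    rw [Hrepr]
    exact intervalIntegral.integral_interval_sub_left
      ((hΞz p).intervalIntegrable _ _) ((hΞz p).intervalIntegrable _ _)
  have Hper : ∀ x, Function.Periodic (H x) L := by
    intro x t
    simp only [hH, hGper, hΞper]
  set M : ℝ := C * (G₁ + b₁) with hMdef
  have hM0 : 0 ≤ M := mul_nonneg hC0 (by linarith)
  have Hbd : ∀ x t, |H x t| ≤ M := by
    intro x t
    have h1 : ‖∫ z in Ioo (-(b x)) (G (x, t)), Ξ (x, t, z)‖ ≤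
        C * (volume (Ioo (-(b x)) (G (x, t)))).toReal :=
      norm_setIntegral_le_of_norm_le_const measure_Ioo_lt_top
        (fun z _ => by simpa [Real.norm_eq_abs] using hΞbd (x, t, z))
    rw [Real.norm_eq_abs] at h1
    refine le_trans h1 ?_
    rw [Real.volume_Ioo, ENNReal.toReal_ofReal (by linarith [hle x t])]
    have : G (x, t) - -(b x) ≤ G₁ + b₁ := by
      have := hGB x t; have := hbB x; linarith
    exact mul_le_mul_of_nonneg_left this hC0
  -- Step A : reduction to a 1D oscillating integral
  have stepA : ∀ ε : ℝ, 0 < ε →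
      ε⁻¹ * (∫ p in thinDomain b G ε, Ξ (p.1, p.1 / ε, p.2 / ε)) =
        ∫ x in Ioo (0:ℝ) 1, H x (x / ε) := by
    intro ε hε
    have hεne : ε ≠ 0 := hε.ne'
    have hSopen : IsOpen (thinDomain b G ε) := by
      have hrw : thinDomain b G ε =
          ({p : ℝ × ℝ | p.1 ∈ Ioo 0 1} ∩ {p : ℝ × ℝ | -(ε * b p.1) < p.2}) ∩
          {p : ℝ × ℝ | p.2 < ε * G (p.1, p.1 / ε)} := by
        ext p; simp only [thinDomain, mem_setOf_eq, mem_Ioo, mem_inter_iff]; tauto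
      rw [hrw]
      refine ((isOpen_Ioo.preimage continuous_fst).inter ?_).inter ?_
      · exact isOpen_lt (by fun_prop) continuous_snd
      · exact isOpen_lt continuous_snd (by fun_prop)
    have hΦc : Continuous fun p : ℝ × ℝ => Ξ (p.1, p.1 / ε, p.2 / ε) := by fun_prop
    have hSsub : thinDomain b G ε ⊆ Icc 0 1 ×ˢ Icc (-(ε * b₁)) (ε * G₁) := by
      rintro ⟨x, y⟩ ⟨hx, hy⟩
      refine ⟨⟨hx.1.le, hx.2.le⟩, ?_, ?_⟩
      · exact le_trans (neg_le_neg (mul_le_mul_of_nonneg_left (hbB x) hε.le)) hy.1.le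
      · exact hy.2.le.trans (mul_le_mul_of_nonneg_left (hGB x (x / ε)) hε.le)
    have hSfin : volume (thinDomain b G ε) < ∞ :=
      lt_of_le_of_lt (measure_mono hSsub) (isCompact_Icc.prod isCompact_Icc).measure_lt_top
    have hint : IntegrableOn (fun p : ℝ × ℝ => Ξ (p.1, p.1 / ε, p.2 / ε))
        (thinDomain b G ε) := by
      refine ⟨hΦc.aestronglyMeasurable, ?_⟩
      haveI : IsFiniteMeasure (volume.restrict (thinDomain b G ε)) :=
        ⟨by rwa [Measure.restrict_apply_univ]⟩
      exact HasFiniteIntegral.of_bounded (C := C)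
        (ae_of_all _ fun p => by simpa [Real.norm_eq_abs] using hΞbd _)
    have hfub : (∫ p in thinDomain b G ε, Ξ (p.1, p.1 / ε, p.2 / ε)) =
        ∫ x : ℝ, ∫ y : ℝ,
          (thinDomain b G ε).indicator (fun p : ℝ × ℝ => Ξ (p.1, p.1 / ε, p.2 / ε)) (x, y) := by
      rw [← integral_indicator hSopen.measurableSet]
      rw [show (volume : Measure (ℝ × ℝ)) = (volume : Measure ℝ).prod volume from
        Measure.volume_eq_prod ℝ ℝ]
      exact integral_prod _ (by
        rw [← Measure.volume_eq_prod]
        exact (integrable_indicator_iff hSopen.measurableSet).2 hint)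
    have hinner : (fun x : ℝ => ∫ y : ℝ,
          (thinDomain b G ε).indicator (fun p : ℝ × ℝ => Ξ (p.1, p.1 / ε, p.2 / ε)) (x, y))
        = (Ioo (0:ℝ) 1).indicator
            (fun x => ∫ y in Ioo (-(ε * b x)) (ε * G (x, x / ε)), Ξ (x, x / ε, y / ε)) := by
      funext x
      by_cases hx : x ∈ Ioo (0:ℝ) 1
      · rw [indicator_of_mem hx, ← integral_indicator measurableSet_Ioo]
        congr 1
        funext y
        by_cases hy : y ∈ Ioo (-(ε * b x)) (ε * G (x, x / ε))
        · rw [indicator_of_mem (show (x, y) ∈ thinDomain b G ε from ⟨hx, hy⟩),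
            indicator_of_mem hy]
        · rw [indicator_of_notMem (show (x, y) ∉ thinDomain b G ε from fun h => hy h.2),
            indicator_of_notMem hy]
      · rw [indicator_of_notMem hx]
        have hz : ∀ y : ℝ,
            (thinDomain b G ε).indicator (fun p : ℝ × ℝ => Ξ (p.1, p.1 / ε, p.2 / ε)) (x, y) = 0 :=
          fun y => indicator_of_notMem (fun h => hx h.1) _
        simp only [hz, integral_zero]
    have hsub : ∀ x ∈ Ioo (0:ℝ) 1,
        (∫ y in Ioo (-(ε * b x)) (ε * G (x, x / ε)), Ξ (x, x / ε, y / ε))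
          = ε * H x (x / ε) := by
      intro x _
      have h1 : -(ε * b x) ≤ ε * G (x, x / ε) :=
        le_trans (neg_nonpos.2 (mul_nonneg hε.le (hb0 x)))
          (mul_nonneg hε.le (hG₀.le.trans (hG0 _ _)))
      rw [← integral_Ioc_eq_integral_Ioo, ← intervalIntegral.integral_of_le h1,
        intervalIntegral.integral_comp_div (fun y => Ξ (x, x / ε, y)) hεne,
        show -(ε * b x) / ε = -(b x) by field_simp [mul_comm],
        show ε * G (x, x / ε) / ε = G (x, x / ε) by field_simp [mul_comm], Hrepr, smul_eq_mul]
    rw [hfub, hinner, integral_indicator measurableSet_Ioo,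
      setIntegral_congr_fun measurableSet_Ioo hsub, integral_const_mul, ← mul_assoc,
      inv_mul_cancel₀ hεne, one_mul]
  have hosc := osc_avg L M hL hM0 H Hcont Hper Hbd
  simp only [hH] at hosc stepA
  refine Tendsto.congr' ?_ hosc
  filter_upwards [self_mem_nhdsWithin] with ε hε
  exact (stepA ε hε).symm


/-- Thin-domain two-scale averaging: for `Ξ : [0,1] × ℝ × ℝ → ℝ` continuous,
bounded and `L`-periodic in its second variable,
`ε⁻¹ ∫_{R^ε} Ξ(x₁, x₁/ε, x₂/ε) dx₁dx₂ → (1/L) ∫₀¹ ∫₀^L ∫_{-b(x)}^{G(x,y)} Ξ(x,y,z) dz dy dx`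
as `ε → 0⁺`. -/
theorem stmt_12 (L b₁ G₀ G₁ : ℝ) (hL : 0 < L) (hG₀ : 0 < G₀)
    (b : ℝ → ℝ) (hbc : ContinuousOn b (Icc 0 1)) (hbC1 : ContDiffOn ℝ 1 b (Ioo 0 1))
    (hbb : ∀ x ∈ Icc (0 : ℝ) 1, 0 ≤ b x ∧ b x ≤ b₁)
    (G : ℝ × ℝ → ℝ) (hGc : ContinuousOn G (Icc 0 1 ×ˢ (univ : Set ℝ)))
    (hGC1 : ContDiffOn ℝ 1 G (Ioo 0 1 ×ˢ (univ : Set ℝ)))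
    (hGper : ∀ x y : ℝ, G (x, y + L) = G (x, y))
    (hGb : ∀ x ∈ Icc (0 : ℝ) 1, ∀ y : ℝ, G₀ ≤ G (x, y) ∧ G (x, y) ≤ G₁)
    (Ξ : ℝ × ℝ × ℝ → ℝ)
    (hΞc : ContinuousOn Ξ (Icc 0 1 ×ˢ (univ : Set (ℝ × ℝ))))
    (hΞbd : ∃ C : ℝ, ∀ q : ℝ × ℝ × ℝ, |Ξ q| ≤ C)
    (hΞper : ∀ x y z : ℝ, Ξ (x, y + L, z) = Ξ (x, y, z)) :
    Tendsto (fun ε : ℝ => ε⁻¹ * ∫ p in thinDomain b G ε, Ξ (p.1, p.1 / ε, p.2 / ε))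
      (nhdsWithin 0 (Ioi 0))
      (nhds ((1 / L) * ∫ x in Ioo (0 : ℝ) 1, ∫ y in Ioo (0 : ℝ) L,
        ∫ z in Ioo (-(b x)) (G (x, y)), Ξ (x, y, z))) := by
  obtain ⟨C, hC⟩ := hΞbd
  set c : ℝ → ℝ := fun x => max 0 (min 1 x) with hcdef
  have hccont : Continuous c := continuous_const.max (continuous_const.min continuous_id)
  have hcmem : ∀ x : ℝ, c x ∈ Icc (0:ℝ) 1 := fun x =>
    ⟨le_max_left _ _, max_le zero_le_one (min_le_left _ _)⟩
  have hcid : ∀ x ∈ Icc (0:ℝ) 1, c x = x := by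
    intro x hx
    rw [hcdef]
    simp only
    rw [min_eq_right hx.2, max_eq_right hx.1]
  have hb' : Continuous fun x => b (c x) := hbc.comp_continuous hccont hcmem
  have hG' : Continuous fun p : ℝ × ℝ => G (c p.1, p.2) :=
    hGc.comp_continuous ((hccont.comp continuous_fst).prodMk continuous_snd)
      (fun p => mk_mem_prod (hcmem _) (mem_univ _))
  have hΞ' : Continuous fun q : ℝ × ℝ × ℝ => Ξ (c q.1, q.2) :=
    hΞc.comp_continuous ((hccont.comp continuous_fst).prodMk continuous_snd)
      (fun q => mk_mem_prod (hcmem _) (mem_univ _))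
  have key := main_avg L b₁ G₀ G₁ C hL hG₀
    (fun x => b (c x)) hb' (fun x => (hbb _ (hcmem x)).1) (fun x => (hbb _ (hcmem x)).2)
    (fun p => G (c p.1, p.2)) hG' (fun x y => hGper (c x) y)
    (fun x y => (hGb _ (hcmem x) y).1) (fun x y => (hGb _ (hcmem x) y).2)
    (fun q => Ξ (c q.1, q.2)) hΞ' (fun q => hC _) (fun x y z => hΞper (c x) y z)
  have hlim : ((1 / L) * ∫ x in Ioo (0 : ℝ) 1, ∫ y in Ioo (0 : ℝ) L,
        ∫ z in Ioo (-(b x)) (G (x, y)), Ξ (x, y, z))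
      = (1 / L) * ∫ x in Ioo (0 : ℝ) 1, ∫ y in Ioo (0 : ℝ) L,
        ∫ z in Ioo (-(b (c x))) (G (c x, y)), Ξ (c x, y, z) := by
    congr 1
    refine setIntegral_congr_fun measurableSet_Ioo fun x hx => ?_
    rw [hcid x (Ioo_subset_Icc_self hx)]
  rw [hlim]
  refine Tendsto.congr' ?_ key
  filter_upwards [self_mem_nhdsWithin] with ε hε
  have hset : thinDomain (fun x => b (c x)) (fun p => G (c p.1, p.2)) ε = thinDomain b G ε := by
    ext p
    simp only [thinDomain, mem_setOf_eq]
    constructor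
    · rintro ⟨h1, h2⟩
      rw [hcid p.1 (Ioo_subset_Icc_self h1)] at h2
      exact ⟨h1, h2⟩
    · rintro ⟨h1, h2⟩
      rw [hcid p.1 (Ioo_subset_Icc_self h1)]
      exact ⟨h1, h2⟩
  have hopen : IsOpen (thinDomain (fun x => b (c x)) (fun p => G (c p.1, p.2)) ε) := by
    have hrw : thinDomain (fun x => b (c x)) (fun p => G (c p.1, p.2)) ε =
        ({p : ℝ × ℝ | p.1 ∈ Ioo 0 1} ∩ {p : ℝ × ℝ | -(ε * b (c p.1)) < p.2}) ∩
        {p : ℝ × ℝ | p.2 < ε * G (c p.1, p.1 / ε)} := by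
      ext p; simp only [thinDomain, mem_setOf_eq, mem_Ioo, mem_inter_iff]; tauto
    rw [hrw]
    have hc1 : Continuous fun p : ℝ × ℝ => -(ε * b (c p.1)) := by
      exact (continuous_const.mul (hb'.comp continuous_fst)).neg
    have hc2 : Continuous fun p : ℝ × ℝ => ε * G (c p.1, p.1 / ε) := by
      exact continuous_const.mul
        (hG'.comp (continuous_fst.prodMk (continuous_fst.div_const ε)))
    refine ((isOpen_Ioo.preimage continuous_fst).inter ?_).inter ?_
    · exact isOpen_lt hc1 continuous_snd
    · exact isOpen_lt continuous_snd hc2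
  have hmeas : MeasurableSet (thinDomain b G ε) := by
    rw [← hset]; exact hopen.measurableSet
  rw [hset]
  congr 1
  refine setIntegral_congr_fun hmeas fun p hp => ?_
  rw [hcid p.1 (Ioo_subset_Icc_self hp.1)]
end
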